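/- arXiv:1512.01821 — 2 statements merged into one kernel-verified Lean document; each statement's English description precedes it below -/
import Mathlib

section
/- Let G be a graph with a total order on its edges and let T be the Tutte polynomial of G defined by the corank-nullity expansion T_G(x,y) = Σ_{S ⊆ E(G)} (x−1)^{κ(S)−κ} (y−1)^{|S|+κ(S)−n}. Then T_G(x̂+ŵ, ŷ+ẑ) = Σ_{S ⊆ E(G)} x̂^{|Î(S)∩S|} ŵ^{|Î(S)\S|} ŷ^{|L̂(S)\S|} ẑ^{|L̂(S)∩S|}. -/
open scoped Classical

/-- A multigraph with a fixed reference orientation: each edge `e` has a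
source `src e` and a target `tgt e` (the positive direction `e⁺ = (src e, tgt e)`). -/
structure OrGraph (V E : Type) where
  src : E → V
  tgt : E → V

namespace OrGraph

variable {V E : Type} (G : OrGraph V E)

/-- Two vertices are joined by some edge of `S`. -/
def step (S : Set E) (a b : V) : Prop :=
  ∃ e ∈ S, (G.src e = a ∧ G.tgt e = b) ∨ (G.src e = b ∧ G.tgt e = a)

/-- `κ(S)`: the number of connected components of the spanning subgraph `(V, S)`. -/
noncomputable def kappa (S : Set E) : ℕ :=
  Nat.card (Quot (G.step S))

/-- A cut of `G`: a minimal nonempty edge set whose removal increases the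
number of connected components. -/
def IsCut (C : Set E) : Prop :=
  C.Nonempty ∧ G.kappa Cᶜ > G.kappa Set.univ ∧
    ∀ C' : Set E, C' ⊂ C → C'.Nonempty → ¬ (G.kappa C'ᶜ > G.kappa Set.univ)

/-- A cycle of `G`: a minimal nonempty edge set meeting no cut of `G` in
precisely one element. -/
def IsCycle (C : Set E) : Prop :=
  C.Nonempty ∧ (∀ Cu : Set E, G.IsCut Cu → (Cu ∩ C).ncard ≠ 1) ∧
    ∀ C' : Set E, C' ⊂ C → C'.Nonempty →
      ¬ (∀ Cu : Set E, G.IsCut Cu → (Cu ∩ C').ncard ≠ 1)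

/-- Head of edge `e` under orientation `O` (`O e = true` means the reference
direction `src e → tgt e`). -/
def ohead (O : E → Bool) (e : E) : V := if O e then G.tgt e else G.src e

/-- Tail of edge `e` under orientation `O`. -/
def otail (O : E → Bool) (e : E) : V := if O e then G.src e else G.tgt e

/-- Edge `e` crosses the vertex set `U` (exactly one endpoint in `U`). -/
def crossing (U : Set V) (e : E) : Prop := G.src e ∈ U ↔ G.tgt e ∉ U

/-- A directed cut of the orientation `O`: a cut all of whose edges are
oriented consistently out of some vertex set `U`. -/
def IsDirCut (O : E → Bool) (C : Set E) : Prop :=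
  G.IsCut C ∧ ∃ U : Set V, (∀ e, e ∈ C ↔ G.crossing U e) ∧ ∀ e ∈ C, G.otail O e ∈ U

/-- A directed cycle of the orientation `O`: a cycle oriented consistently,
i.e. in-degree equals out-degree at each vertex within the cycle. -/
def IsDirCycle (O : E → Bool) (C : Set E) : Prop :=
  G.IsCycle C ∧ ∀ v : V,
    {e ∈ C | G.ohead O e = v}.ncard = {e ∈ C | G.otail O e = v}.ncard

section Activities

variable [LinearOrder E]

/-- `Î(S)`: cut active edges of the spanning subgraph `S`. -/
def Iact (S : Set E) : Set E :=
  {e | ∃ C : Set E, G.IsCut C ∧ e ∈ C ∧ (∀ f ∈ C, f ≠ e → f ∉ S) ∧ ∀ f ∈ C, e ≤ f}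

/-- `L̂(S)`: cycle active edges of the spanning subgraph `S`. -/
def Lact (S : Set E) : Set E :=
  {e | ∃ C : Set E, G.IsCycle C ∧ e ∈ C ∧ (∀ f ∈ C, f = e ∨ f ∈ S) ∧ ∀ f ∈ C, e ≤ f}

/-- `I(O)`: cut active edges of the orientation `O`. -/
def Ior (O : E → Bool) : Set E :=
  {e | ∃ C : Set E, G.IsDirCut O C ∧ e ∈ C ∧ ∀ f ∈ C, e ≤ f}

/-- `L(O)`: cycle active edges of the orientation `O`. -/
def Lor (O : E → Bool) : Set E :=
  {e | ∃ C : Set E, G.IsDirCycle O C ∧ e ∈ C ∧ ∀ f ∈ C, e ≤ f}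

end Activities

/-- The Tutte polynomial via the corank-nullity expansion, evaluated in a
commutative ring. -/
noncomputable def tutte [Fintype V] [Fintype E] (R : Type) [CommRing R] (x y : R) : R :=
  ∑ S : Finset E, (x - 1) ^ (G.kappa ↑S - G.kappa Set.univ) *
    (y - 1) ^ (S.card + G.kappa ↑S - Fintype.card V)

/-! ### Fourientations.
A fourientation is `F : E → Bool × Bool`, recording whether `e⁺` resp. `e⁻`
belongs to the fourientation. -/

/-- A potential cut of the fourientation `F`: a directed cut each of whose
edges is unoriented in `F` or oriented in the cut direction (out of `U`). -/
def PotCut (F : E → Bool × Bool) (C : Set E) : Prop :=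
  G.IsCut C ∧ ∃ U : Set V, (∀ e, e ∈ C ↔ G.crossing U e) ∧
    ∀ e ∈ C, (G.src e ∈ U → (F e).2 = false) ∧ (G.src e ∉ U → (F e).1 = false)

/-- A potential cycle of the fourientation `F`, with cyclic direction `dir`:
a consistently directed cycle each of whose edges has its `dir`-direction
present in `F` (so each edge is bioriented or oriented in the cycle direction). -/
def PotCycle (F : E → Bool × Bool) (C : Set E) (dir : E → Bool) : Prop :=
  G.IsCycle C ∧
    (∀ v : V, {e ∈ C | G.ohead dir e = v}.ncard = {e ∈ C | G.otail dir e = v}.ncard) ∧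
    ∀ e ∈ C, (if dir e then (F e).1 else (F e).2) = true

/-- Add the direction `d` of edge `e` to the fourientation `F`. -/
def addDir [DecidableEq E] (F : E → Bool × Bool) (e : E) (d : Bool) : E → Bool × Bool :=
  Function.update F e (if d then (true, (F e).2) else ((F e).1, true))

/-- Remove the direction `d` of edge `e` from the fourientation `F`. -/
def remDir [DecidableEq E] (F : E → Bool × Bool) (e : E) (d : Bool) : E → Bool × Bool :=
  Function.update F e (if d then (false, (F e).2) else ((F e).1, false))

/-- `ᵉO`: toggle the status of the edge `e` in the fourientation `F`. -/
def toggle [DecidableEq E] (F : E → Bool × Bool) (e : E) : E → Bool × Bool :=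
  Function.update F e ((F e).2, (F e).1)

section FourActivities

variable [LinearOrder E]

/-- `I^o(O)`: oriented edges that are minimal in some potential cut. -/
def Io (F : E → Bool × Bool) : Set E :=
  {f | (F f).1 ≠ (F f).2 ∧ ∃ C : Set E, G.PotCut F C ∧ f ∈ C ∧ ∀ g ∈ C, f ≤ g}

/-- `L^o(O)`: oriented edges that are minimal in some potential cycle. -/
def Lo (F : E → Bool × Bool) : Set E :=
  {f | (F f).1 ≠ (F f).2 ∧
    ∃ (C : Set E) (dir : E → Bool), G.PotCycle F C dir ∧ f ∈ C ∧ ∀ g ∈ C, f ≤ g}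

/-- `I^u(O)`: unoriented edges `f` minimal in some potential cut of
`O ∪ {f^{σᵤ(f)}}`. -/
def Iu (σu : E → Bool) (F : E → Bool × Bool) : Set E :=
  {f | F f = (false, false) ∧
    ∃ C : Set E, G.PotCut (addDir F f (σu f)) C ∧ f ∈ C ∧ ∀ g ∈ C, f ≤ g}

/-- `L^b(O)`: bioriented edges `f` minimal in some potential cycle of
`O \ {f^{σ_b(f)}}`. -/
def Lb (σb : E → Bool) (F : E → Bool × Bool) : Set E :=
  {f | F f = (true, true) ∧
    ∃ (C : Set E) (dir : E → Bool),
      G.PotCycle (remDir F f (σb f)) C dir ∧ f ∈ C ∧ ∀ g ∈ C, f ≤ g}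

end FourActivities

/-- The deletion `G − e`. -/
def del (e : E) : OrGraph V {f : E // f ≠ e} :=
  ⟨fun f => G.src f.1, fun f => G.tgt f.1⟩

/-- The contraction `G/e`: identify the endpoints of `e` and remove `e`. -/
def contr (e : E) : OrGraph (Quot (fun a b => a = G.src e ∧ b = G.tgt e)) {f : E // f ≠ e} :=
  ⟨fun f => Quot.mk _ (G.src f.1), fun f => Quot.mk _ (G.tgt f.1)⟩

/-! ### Potential walks in a fourientation. A walk step is a pair `(e, d)` of an
edge and a chosen direction (`d = true` for the reference direction). -/

/-- Tail of the directed edge `(e, d)`. -/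
def ftail (p : E × Bool) : V := if p.2 then G.src p.1 else G.tgt p.1

/-- Head of the directed edge `(e, d)`. -/
def fhead (p : E × Bool) : V := if p.2 then G.tgt p.1 else G.src p.1

/-- The direction `d` of `e` is present in the fourientation `F`. -/
def present (F : E → Bool × Bool) (p : E × Bool) : Prop :=
  (if p.2 then (F p.1).1 else (F p.1).2) = true

/-- A potential walk of the fourientation `F` from `a` to `b`: each step uses
a direction present in `F` (so each edge is bioriented or oriented
consistently with the walk). -/
def IsPWalk (F : E → Bool × Bool) : V → List (E × Bool) → V → Prop
  | a, [], b => a = b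
  | a, p :: rest, b => G.ftail p = a ∧ present F p ∧ IsPWalk F (G.fhead p) rest b

/-- A potential path: a potential walk visiting pairwise distinct vertices. -/
def IsPPath (F : E → Bool × Bool) (a : V) (w : List (E × Bool)) (b : V) : Prop :=
  G.IsPWalk F a w b ∧ (a :: w.map G.fhead).Nodup

end OrGraph
namespace GTProof

open Relation

variable {V E : Type}

/-- Connectivity in the spanning subgraph. -/
def _root_.OrGraph.conn (G : OrGraph V E) (A : Set E) : V → V → Prop := Relation.ReflTransGen (G.step A)

variable {G : OrGraph V E}

lemma step_symm {A : Set E} : Symmetric (G.step A) := by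
  rintro a b ⟨e, he, h | h⟩
  · exact ⟨e, he, Or.inr h⟩
  · exact ⟨e, he, Or.inl h⟩

lemma conn_refl {A : Set E} (a : V) : G.conn A a a := ReflTransGen.refl

lemma conn_symm {A : Set E} {a b : V} (h : G.conn A a b) : G.conn A b a :=
  (@ReflTransGen.stdSymm _ _ ⟨fun _ _ hs => step_symm hs⟩).symm _ _ h

lemma conn_trans {A : Set E} {a b c : V} (h : G.conn A a b) (h' : G.conn A b c) :
    G.conn A a c := ReflTransGen.trans h h'

lemma step_mono {A B : Set E} (h : A ⊆ B) {a b : V} (hs : G.step A a b) : G.step B a b := by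
  obtain ⟨e, he, h'⟩ := hs; exact ⟨e, h he, h'⟩

lemma conn_mono {A B : Set E} (h : A ⊆ B) {a b : V} (hc : G.conn A a b) : G.conn B a b :=
  ReflTransGen.mono (fun _ _ hs => step_mono h hs) _ _ hc

lemma conn_of_mem {A : Set E} {e : E} (he : e ∈ A) : G.conn A (G.src e) (G.tgt e) :=
  ReflTransGen.single ⟨e, he, Or.inl ⟨rfl, rfl⟩⟩

lemma conn_empty {a b : V} (h : G.conn (∅ : Set E) a b) : a = b := by
  induction h with
  | refl => rfl
  | tail _ hs ih => obtain ⟨e, he, _⟩ := hs; exact absurd he (Set.notMem_empty e)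

lemma eqvGen_iff_conn {A : Set E} {a b : V} : EqvGen (G.step A) a b ↔ G.conn A a b := by
  constructor
  · intro h
    induction h with
    | rel _ _ h => exact ReflTransGen.single h
    | refl => exact ReflTransGen.refl
    | symm _ _ _ ih => exact conn_symm ih
    | trans _ _ _ _ _ ih₁ ih₂ => exact conn_trans ih₁ ih₂
  · intro h
    induction h with
    | refl => exact EqvGen.refl a
    | tail _ hs ih => exact EqvGen.trans _ _ _ ih (EqvGen.rel _ _ hs)

lemma quot_mk_eq_iff {A : Set E} {a b : V} :
    Quot.mk (G.step A) a = Quot.mk (G.step A) b ↔ G.conn A a b := by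
  rw [Quot.eq]; exact eqvGen_iff_conn

/-- Decomposition of connectivity after inserting one edge. -/
lemma conn_insert {A : Set E} {f : E} {a b : V} (h : G.conn (insert f A) a b) :
    G.conn A a b ∨ (G.conn A a (G.src f) ∧ G.conn A (G.tgt f) b) ∨
      (G.conn A a (G.tgt f) ∧ G.conn A (G.src f) b) := by
  induction h with
  | refl => exact Or.inl ReflTransGen.refl
  | tail _ hs ih =>
    obtain ⟨e, he, hor⟩ := hs
    rcases Set.mem_insert_iff.mp he with rfl | heA
    · -- the step uses the edge f
      rcases hor with ⟨hx, hy⟩ | ⟨hx, hy⟩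
      · -- step from src f to tgt f
        subst hx; subst hy
        rcases ih with h | ⟨h₁, h₂⟩ | ⟨h₁, h₂⟩
        · exact Or.inr (Or.inl ⟨h, ReflTransGen.refl⟩)
        · exact Or.inr (Or.inl ⟨h₁, ReflTransGen.refl⟩)
        · exact Or.inl h₁
      · subst hx; subst hy
        rcases ih with h | ⟨h₁, h₂⟩ | ⟨h₁, h₂⟩
        · exact Or.inr (Or.inr ⟨h, ReflTransGen.refl⟩)
        · exact Or.inl h₁
        · exact Or.inr (Or.inr ⟨h₁, ReflTransGen.refl⟩)
    · -- ordinary step in A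
      have hstep : G.step A _ _ := ⟨e, heA, hor⟩
      rcases ih with h | ⟨h₁, h₂⟩ | ⟨h₁, h₂⟩
      · exact Or.inl (h.tail hstep)
      · exact Or.inr (Or.inl ⟨h₁, h₂.tail hstep⟩)
      · exact Or.inr (Or.inr ⟨h₁, h₂.tail hstep⟩)

lemma conn_insert_iff {A : Set E} {f : E} {a b : V}
    (hf : G.conn A (G.src f) (G.tgt f)) : G.conn (insert f A) a b ↔ G.conn A a b := by
  constructor
  · intro h
    rcases conn_insert h with h | ⟨h₁, h₂⟩ | ⟨h₁, h₂⟩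
    · exact h
    · exact conn_trans h₁ (conn_trans hf h₂)
    · exact conn_trans h₁ (conn_trans (conn_symm hf) h₂)
  · exact conn_mono (Set.subset_insert f A)


section Kappa

variable [Finite V]

lemma kappa_le_of_step_imp {A B : Set E} (h : ∀ a b, G.step B a b → G.conn A a b) :
    G.kappa A ≤ G.kappa B := by
  have : Function.Surjective
      (Quot.lift (Quot.mk (G.step A)) (fun a b hs => quot_mk_eq_iff.mpr (h a b hs)) :
        Quot (G.step B) → Quot (G.step A)) := by
    refine Quot.ind (fun a => ?_); exact ⟨Quot.mk _ a, rfl⟩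
  exact Nat.card_le_card_of_surjective _ this

lemma kappa_mono {A B : Set E} (h : A ⊆ B) : G.kappa B ≤ G.kappa A :=
  kappa_le_of_step_imp (fun _ _ hs => ReflTransGen.single (step_mono h hs))

lemma kappa_congr {A B : Set E} (h : ∀ a b, G.conn A a b ↔ G.conn B a b) :
    G.kappa A = G.kappa B :=
  le_antisymm (kappa_le_of_step_imp fun a b hs => (h a b).mpr (ReflTransGen.single hs))
    (kappa_le_of_step_imp fun a b hs => (h a b).mp (ReflTransGen.single hs))

lemma kappa_insert_of_conn {A : Set E} {f : E} (h : G.conn A (G.src f) (G.tgt f)) :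
    G.kappa (insert f A) = G.kappa A :=
  kappa_congr fun _ _ => conn_insert_iff h

open Classical in
lemma kappa_insert_of_not_conn {A : Set E} {f : E} (h : ¬ G.conn A (G.src f) (G.tgt f)) :
    G.kappa A = G.kappa (insert f A) + 1 := by
  set A' : Set E := insert f A with hA'
  have hφwd : ∀ a b, G.step A a b →
      Quot.mk (G.step A') a = Quot.mk (G.step A') b := fun a b hs =>
    quot_mk_eq_iff.mpr (ReflTransGen.single (step_mono (Set.subset_insert f A) hs))
  let φ : Quot (G.step A) → Quot (G.step A') := Quot.lift (Quot.mk (G.step A')) hφwd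
  let y := G.tgt f
  let ψ : Quot (G.step A) → Option (Quot (G.step A')) := fun q =>
    if q = Quot.mk (G.step A) y then none else some (φ q)
  have hψbij : Function.Bijective ψ := by
    constructor
    · intro q₁ q₂ hq
      by_cases h₁ : q₁ = Quot.mk (G.step A) y <;> by_cases h₂ : q₂ = Quot.mk (G.step A) y
      · rw [h₁, h₂]
      · exact absurd hq (by simp [ψ, if_pos h₁, if_neg h₂])
      · exact absurd hq (by simp [ψ, if_neg h₁, if_pos h₂])
      · simp only [ψ, if_neg h₁, if_neg h₂, Option.some_inj] at hq
        revert h₁ h₂ hq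
        refine Quot.induction_on₂ q₁ q₂ (fun a b h₁ h₂ hq => ?_)
        have hab : G.conn A' a b := quot_mk_eq_iff.mp hq
        rcases conn_insert hab with hc | ⟨hc₁, hc₂⟩ | ⟨hc₁, hc₂⟩
        · exact quot_mk_eq_iff.mpr hc
        · exact absurd (quot_mk_eq_iff.mpr (conn_symm hc₂)) h₂
        · exact absurd (quot_mk_eq_iff.mpr hc₁) h₁
    · intro o
      rcases o with _ | c
      · exact ⟨Quot.mk _ y, if_pos rfl⟩
      · refine Quot.induction_on c (fun v => ?_)
        by_cases hv : Quot.mk (G.step A) v = Quot.mk (G.step A) y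
        · refine ⟨Quot.mk _ (G.src f), ?_⟩
          have hne : Quot.mk (G.step A) (G.src f) ≠ Quot.mk (G.step A) y :=
            fun hc => h (quot_mk_eq_iff.mp hc)
          have : φ (Quot.mk (G.step A) (G.src f)) = Quot.mk (G.step A') v := by
            show Quot.mk (G.step A') (G.src f) = Quot.mk (G.step A') v
            refine quot_mk_eq_iff.mpr (conn_trans (conn_of_mem (Set.mem_insert f A)) ?_)
            exact conn_mono (Set.subset_insert f A) (conn_symm (quot_mk_eq_iff.mp hv))
          simp [ψ, if_neg hne, this]
        · refine ⟨Quot.mk _ v, ?_⟩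
          simp only [ψ, if_neg hv]; rfl
  have hcard : G.kappa A = Nat.card (Option (Quot (G.step A'))) :=
    Nat.card_eq_of_bijective ψ hψbij
  have : Nat.card (Option (Quot (G.step A'))) = G.kappa A' + 1 := by
    have : Finite (Quot (G.step A')) := Quot.finite _
    haveI : Fintype (Quot (G.step A')) := Fintype.ofFinite _
    simp [Nat.card_eq_fintype_card, OrGraph.kappa]
  rw [hcard, this]

lemma kappa_lt_of_mem {A B : Set E} (hAB : A ⊆ B) {e : E} (he : e ∈ B)
    (h : ¬ G.conn A (G.src e) (G.tgt e)) : G.kappa B < G.kappa A := by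
  have h₁ : G.kappa B ≤ G.kappa (insert e A) := kappa_mono (Set.insert_subset he hAB)
  have h₂ : G.kappa A = G.kappa (insert e A) + 1 := kappa_insert_of_not_conn h
  omega

omit [Finite V] in
lemma kappa_empty : G.kappa (∅ : Set E) = Nat.card V := by
  refine Nat.card_eq_of_bijective
    (Quot.lift id (fun a b hs => absurd hs (by rintro ⟨e, he, _⟩; exact he)) :
      Quot (G.step ∅) → V) ⟨?_, fun v => ⟨Quot.mk _ v, rfl⟩⟩
  refine Quot.ind (fun a => Quot.ind (fun b h => ?_))
  exact congrArg _ (h : a = b)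

end Kappa

section Cut

variable [Finite V] [Finite E]

lemma cut_not_conn {C A : Set E} (hC : G.IsCut C) {e : E} (he : e ∈ C)
    (hdisj : ∀ f ∈ C, f ∉ A) : ¬ G.conn A (G.src e) (G.tgt e) := by
  intro hconn
  have hAc : A ⊆ Cᶜ := fun f hfA hfC => hdisj f hfC hfA
  have hconn' : G.conn Cᶜ (G.src e) (G.tgt e) := conn_mono hAc hconn
  have hins : G.kappa (insert e Cᶜ) = G.kappa Cᶜ := kappa_insert_of_conn hconn'
  have hcompl : (C \ {e})ᶜ = insert e Cᶜ := by
    ext f; by_cases hf : f = e <;> simp [hf, he]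
  by_cases hCe : (C \ {e}).Nonempty
  · exact hC.2.2 (C \ {e}) ⟨Set.diff_subset, fun hsub => (hsub he).2 rfl⟩ hCe
      (by rw [hcompl, hins]; exact hC.2.1)
  · have hCsub : C ⊆ {e} := by
      intro f hf
      by_contra hfe
      exact hCe ⟨f, hf, hfe⟩
    have hCeq : C = {e} := le_antisymm hCsub (by simp [he])
    have huniv : insert e Cᶜ = Set.univ := by
      rw [hCeq]; ext f; by_cases hf : f = e <;> simp [hf]
    have := hC.2.1
    rw [← huniv, hins] at this
    exact lt_irrefl _ this

lemma exists_cut {A : Set E} {e : E} (hA : ¬ G.conn A (G.src e) (G.tgt e)) :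
    ∃ C : Set E, G.IsCut C ∧ e ∈ C ∧ ∀ f ∈ C, f ∉ A := by
  set u := G.src e with hu
  set v := G.tgt e with hv
  set 𝒮 : Set (Set E) := {B | A ⊆ B ∧ ¬ G.conn B u v} with h𝒮
  obtain ⟨B, hB𝒮, hBmax⟩ :=
    Set.Finite.exists_maximalFor id 𝒮 (Set.toFinite 𝒮) ⟨A, subset_rfl, hA⟩
  obtain ⟨hAB, hBnc⟩ := hB𝒮
  set U : Set V := {w | G.conn B u w} with hU
  set W : Set V := {w | G.conn B v w} with hW
  have hUW : ∀ w, w ∈ U → w ∈ W → False := fun w h1 h2 =>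
    hBnc (conn_trans h1 (conn_symm h2))
  have hBU : ∀ f ∈ B, (G.src f ∈ U ↔ G.tgt f ∈ U) := by
    intro f hf
    constructor
    · intro h; exact conn_trans h (conn_of_mem hf)
    · intro h; exact conn_trans h (conn_symm (conn_of_mem hf))
  set C : Set E := {f | (G.src f ∈ U ∧ G.tgt f ∉ U) ∨ (G.src f ∉ U ∧ G.tgt f ∈ U)} with hC
  have heC : e ∈ C := Or.inl ⟨conn_refl u, hBnc⟩
  have hCB : ∀ f ∈ C, f ∉ B := by
    rintro f (⟨h1, h2⟩ | ⟨h1, h2⟩) hfB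
    · exact h2 ((hBU f hfB).mp h1)
    · exact h1 ((hBU f hfB).mpr h2)
  have hmax : ∀ f ∉ B, G.conn (insert f B) u v := by
    intro f hf
    by_contra hnc
    have : insert f B ⊆ B := hBmax ⟨hAB.trans (Set.subset_insert f B), hnc⟩
      (Set.subset_insert f B)
    exact hf (this (Set.mem_insert f B))
  have hcross : ∀ f ∉ B, (G.src f ∈ U ∧ G.tgt f ∈ W) ∨ (G.tgt f ∈ U ∧ G.src f ∈ W) := by
    intro f hf
    rcases conn_insert (hmax f hf) with h | ⟨h1, h2⟩ | ⟨h1, h2⟩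
    · exact absurd h hBnc
    · exact Or.inl ⟨h1, conn_symm h2⟩
    · exact Or.inr ⟨h1, conn_symm h2⟩
  have hEBC : ∀ f, f ∉ B → f ∈ C := by
    intro f hf
    rcases hcross f hf with ⟨h1, h2⟩ | ⟨h1, h2⟩
    · exact Or.inl ⟨h1, fun hc => hUW _ hc h2⟩
    · exact Or.inr ⟨fun hc => hUW _ hc h2, h1⟩
  have hBcompl : Cᶜ = B := by
    ext f
    constructor
    · intro hf; by_contra hfB; exact hf (hEBC f hfB)
    · intro hf hfC; exact hCB f hfC hf
  refine ⟨C, ⟨⟨e, heC⟩, ?_, ?_⟩, heC, fun f hf hfA => hCB f hf (hAB hfA)⟩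
  · rw [hBcompl]
    exact kappa_lt_of_mem (Set.subset_univ B) (Set.mem_univ e) hBnc
  · intro C' hC' hC'ne hgt
    obtain ⟨g, hgC, hgC'⟩ := Set.exists_of_ssubset hC'
    have hgB : g ∉ B := hCB g hgC
    have huv : G.conn (insert g B) u v := hmax g hgB
    have hsub : insert g B ⊆ C'ᶜ := by
      intro f hf
      rcases Set.mem_insert_iff.mp hf with rfl | hfB
      · exact hgC'
      · exact fun hfC' => hCB f (hC'.1 hfC') hfB
    have hstep : ∀ a b, G.step Set.univ a b → G.conn C'ᶜ a b := by
      intro a b ⟨h, _, hor⟩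
      refine conn_mono hsub ?_
      have hconn_h : G.conn (insert g B) (G.src h) (G.tgt h) := by
        by_cases hhB : h ∈ B
        · exact conn_of_mem (Set.mem_insert_of_mem g hhB)
        · have hmono : ∀ {a b : V}, G.conn B a b → G.conn (insert g B) a b :=
            fun h => conn_mono (Set.subset_insert g B) h
          rcases hcross h hhB with ⟨h1, h2⟩ | ⟨h1, h2⟩
          · exact conn_trans (hmono (conn_symm h1)) (conn_trans huv (hmono h2))
          · exact conn_symm
              (conn_trans (hmono (conn_symm h1)) (conn_trans huv (hmono h2)))
      rcases hor with ⟨h1, h2⟩ | ⟨h1, h2⟩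
      · rw [← h1, ← h2]; exact hconn_h
      · rw [← h1, ← h2]; exact conn_symm hconn_h
    have hle : G.kappa C'ᶜ ≤ G.kappa Set.univ := kappa_le_of_step_imp hstep
    have hge : G.kappa Set.univ ≤ G.kappa C'ᶜ := kappa_mono (Set.subset_univ _)
    omega

end Cut

section Cycle

variable [Finite V] [Finite E]

lemma cycle_conn {C : Set E} (hC : G.IsCycle C) {e : E} (he : e ∈ C) :
    G.conn (C \ {e}) (G.src e) (G.tgt e) := by
  by_contra hnc
  obtain ⟨D, hD, heD, hdisj⟩ := exists_cut hnc
  have hDC : D ∩ C = {e} := by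
    ext f
    simp only [Set.mem_inter_iff, Set.mem_singleton_iff]
    constructor
    · rintro ⟨hfD, hfC⟩
      by_contra hfe
      exact hdisj f hfD ⟨hfC, hfe⟩
    · rintro rfl
      exact ⟨heD, he⟩
  exact hC.2.1 D hD (by rw [hDC, Set.ncard_singleton])

lemma exists_cycle {B : Set E} {e : E} (heB : e ∉ B)
    (hconn : G.conn B (G.src e) (G.tgt e)) :
    ∃ C : Set E, G.IsCycle C ∧ e ∈ C ∧ C ⊆ insert e B := by
  set u := G.src e with hu
  set v := G.tgt e with hv
  set 𝒮 : Set (Set E) := {P | P ⊆ B ∧ G.conn P u v} with h𝒮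
  obtain ⟨P, ⟨hPB, hPc⟩, hPmin⟩ :=
    Set.Finite.exists_minimalFor id 𝒮 (Set.toFinite 𝒮) ⟨B, subset_rfl, hconn⟩
  have heP : e ∉ P := fun h => heB (hPB h)
  have hminP : ∀ Q, Q ⊂ P → ¬ G.conn Q u v := by
    intro Q hQ hQc
    exact hQ.2 (hPmin ⟨hQ.subset.trans hPB, hQc⟩ hQ.subset)
  have hinsg : ∀ g ∈ P, insert g (P \ {g}) = P := fun g hg => Set.insert_diff_singleton.trans
    (by rw [Set.insert_eq_self.mpr hg])
  have p1 : ∀ g ∈ P, ¬ G.conn (P \ {g}) u v := by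
    intro g hg
    exact hminP _ ⟨Set.diff_subset, fun hsub => (hsub hg).2 rfl⟩
  have p2 : ∀ g ∈ P, G.conn (insert e (P \ {g})) (G.src g) (G.tgt g) := by
    intro g hg
    have hPc' : G.conn (insert g (P \ {g})) u v := by rw [hinsg g hg]; exact hPc
    have hmono : ∀ {a b : V}, G.conn (P \ {g}) a b → G.conn (insert e (P \ {g})) a b :=
      fun h => conn_mono (Set.subset_insert _ _) h
    have hestep : G.conn (insert e (P \ {g})) u v :=
      conn_of_mem (Set.mem_insert _ _)
    rcases conn_insert hPc' with h | ⟨h1, h2⟩ | ⟨h1, h2⟩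
    · exact absurd h (p1 g hg)
    · exact conn_trans (hmono (conn_symm h1))
        (conn_trans hestep (hmono (conn_symm h2)))
    · exact conn_symm (conn_trans (hmono (conn_symm h1))
        (conn_trans hestep (hmono (conn_symm h2))))
  have p3 : ∀ g ∈ P, ¬ G.conn (P \ {g}) (G.src g) (G.tgt g) := by
    intro g hg hgc
    have : G.conn (P \ {g}) u v := by
      rw [← conn_insert_iff hgc, hinsg g hg]; exact hPc
    exact p1 g hg this
  refine ⟨insert e P, ⟨⟨e, Set.mem_insert _ _⟩, ?_, ?_⟩, Set.mem_insert _ _,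
    Set.insert_subset_insert hPB⟩
  · -- meets no cut in exactly one edge
    intro D hD hcard
    obtain ⟨g, hg⟩ := Set.ncard_eq_one.mp hcard
    have hgmem : g ∈ D ∩ insert e P := hg ▸ rfl
    have hgD : g ∈ D := hgmem.1
    rcases Set.mem_insert_iff.mp hgmem.2 with hge | hgP
    · -- g = e
      subst hge
      refine cut_not_conn hD hgD (A := P) ?_ hPc
      intro f hfD hfP
      have hmem : f ∈ D ∩ insert g P := ⟨hfD, Set.mem_insert_of_mem _ hfP⟩
      rw [hg, Set.mem_singleton_iff] at hmem
      exact heP (hmem ▸ hfP)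
    · refine cut_not_conn hD hgD (A := insert e (P \ {g})) ?_ (p2 g hgP)
      intro f hfD hfA
      have hfC : f ∈ D ∩ insert e P := by
        refine ⟨hfD, ?_⟩
        rcases Set.mem_insert_iff.mp hfA with rfl | hfP
        · exact Set.mem_insert _ _
        · exact Set.mem_insert_of_mem _ hfP.1
      rw [hg, Set.mem_singleton_iff] at hfC
      subst hfC
      rcases Set.mem_insert_iff.mp hfA with hfe | hfP
      · exact heP (hfe ▸ hgP)
      · exact hfP.2 rfl
  · -- minimality
    intro C' hss hne hall
    by_cases heC' : e ∈ C'
    · set Q := C' \ {e} with hQ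
      have hQP : Q ⊆ P := by
        intro f hf
        rcases Set.mem_insert_iff.mp (hss.1 hf.1) with rfl | h
        · exact absurd rfl hf.2
        · exact h
      have hQssP : Q ⊂ P := by
        refine ⟨hQP, fun hPQ => ?_⟩
        obtain ⟨m, hmC, hmC'⟩ := Set.exists_of_ssubset hss
        rcases Set.mem_insert_iff.mp hmC with rfl | hmP
        · exact hmC' heC'
        · exact hmC' (hPQ hmP).1
      have hnc : ¬ G.conn Q u v := hminP Q hQssP
      obtain ⟨D, hD, heD, hdisj⟩ := exists_cut hnc
      refine hall D hD ?_
      have : D ∩ C' = {e} := by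
        ext f
        simp only [Set.mem_inter_iff, Set.mem_singleton_iff]
        constructor
        · rintro ⟨hfD, hfC'⟩
          by_contra hfe
          exact hdisj f hfD ⟨hfC', hfe⟩
        · rintro rfl
          exact ⟨heD, heC'⟩
      rw [this, Set.ncard_singleton]
    · obtain ⟨g, hgC'⟩ := hne
      have hgP : g ∈ P := by
        rcases Set.mem_insert_iff.mp (hss.1 hgC') with rfl | h
        · exact absurd hgC' heC'
        · exact h
      have hnc : ¬ G.conn (C' \ {g}) (G.src g) (G.tgt g) := by
        intro hc
        refine p3 g hgP (conn_mono ?_ hc)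
        intro f hf
        refine ⟨?_, hf.2⟩
        rcases Set.mem_insert_iff.mp (hss.1 hf.1) with rfl | h
        · exact absurd hf.1 heC'
        · exact h
      obtain ⟨D, hD, hgD, hdisj⟩ := exists_cut hnc
      refine hall D hD ?_
      have : D ∩ C' = {g} := by
        ext f
        simp only [Set.mem_inter_iff, Set.mem_singleton_iff]
        constructor
        · rintro ⟨hfD, hfC'⟩
          by_contra hfg
          exact hdisj f hfD ⟨hfC', hfg⟩
        · rintro rfl
          exact ⟨hgD, hgC'⟩
      rw [this, Set.ncard_singleton]

end Cycle

section Charact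

variable [Finite V] [Finite E] [LinearOrder E]

/-- The set governing cut-activity of `e` w.r.t. `S`. -/
def Wset (S : Set E) (e : E) : Set E := (S \ {e}) ∪ {f | f < e}

/-- The set governing cycle-activity of `e` w.r.t. `S`. -/
def Zset (S : Set E) (e : E) : Set E := (S \ {e}) ∩ {f | e < f}

lemma Iact_iff {S : Set E} {e : E} :
    e ∈ G.Iact S ↔ ¬ G.conn (Wset S e) (G.src e) (G.tgt e) := by
  constructor
  · rintro ⟨C, hC, heC, hnS, hmin⟩
    refine cut_not_conn hC heC ?_
    rintro f hfC (⟨hfS, hfe⟩ | hflt)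
    · exact hnS f hfC hfe hfS
    · exact absurd (hmin f hfC) (not_le.mpr hflt)
  · intro hnc
    obtain ⟨C, hC, heC, hdisj⟩ := exists_cut hnc
    refine ⟨C, hC, heC, ?_, ?_⟩
    · intro f hfC hfe hfS
      exact hdisj f hfC (Or.inl ⟨hfS, hfe⟩)
    · intro f hfC
      by_contra hlt
      exact hdisj f hfC (Or.inr (not_le.mp hlt))

lemma Lact_iff {S : Set E} {e : E} :
    e ∈ G.Lact S ↔ G.conn (Zset S e) (G.src e) (G.tgt e) := by
  constructor
  · rintro ⟨C, hC, heC, hor, hmin⟩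
    refine conn_mono ?_ (cycle_conn hC heC)
    rintro f ⟨hfC, hfe⟩
    have hfe' : f ≠ e := hfe
    rcases hor f hfC with rfl | hfS
    · exact absurd rfl hfe'
    · exact ⟨⟨hfS, hfe'⟩, lt_of_le_of_ne (hmin f hfC) (Ne.symm hfe')⟩
  · intro hconn
    have heZ : e ∉ Zset S e := fun h => lt_irrefl e h.2
    obtain ⟨C, hC, heC, hsub⟩ := exists_cycle heZ hconn
    refine ⟨C, hC, heC, ?_, ?_⟩
    · intro f hfC
      rcases Set.mem_insert_iff.mp (hsub hfC) with rfl | hfZ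
      · exact Or.inl rfl
      · exact Or.inr hfZ.1.1
    · intro f hfC
      rcases Set.mem_insert_iff.mp (hsub hfC) with rfl | hfZ
      · exact le_refl f
      · exact le_of_lt hfZ.2

lemma Iact_Lact_disjoint {S : Set E} {e : E} (hI : e ∈ G.Iact S) (hL : e ∈ G.Lact S) :
    False := by
  rw [Iact_iff] at hI
  rw [Lact_iff] at hL
  exact hI (conn_mono (fun f hf => Or.inl hf.1) hL)

end Charact

section Toggle

variable [Finite V] [Finite E] [LinearOrder E]

lemma conn_insert_iff_of_blocked {X A : Set E} {f e : E}
    (hnc : ¬ G.conn A (G.src f) (G.tgt f)) (hsub : insert e X ⊆ A) :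
    G.conn (insert f X) (G.src e) (G.tgt e) ↔ G.conn X (G.src e) (G.tgt e) := by
  constructor
  · intro h
    rcases conn_insert h with h | ⟨h1, h2⟩ | ⟨h1, h2⟩
    · exact h
    · exfalso
      refine hnc (conn_mono hsub ?_)
      have hmono : ∀ {a b : V}, G.conn X a b → G.conn (insert e X) a b :=
        fun h => conn_mono (Set.subset_insert _ _) h
      exact conn_trans (hmono (conn_symm h1))
        (conn_trans (conn_of_mem (Set.mem_insert _ _)) (hmono (conn_symm h2)))
    · exfalso
      refine hnc (conn_mono hsub ?_)
      have hmono : ∀ {a b : V}, G.conn X a b → G.conn (insert e X) a b :=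
        fun h => conn_mono (Set.subset_insert _ _) h
      exact conn_symm (conn_trans (hmono (conn_symm h1))
        (conn_trans (conn_of_mem (Set.mem_insert _ _)) (hmono (conn_symm h2))))
  · exact conn_mono (Set.subset_insert f X)

/-- If two sets agree except possibly at `f`, and `f`'s endpoints are either
blocked (`f` cut-active) or connected (`f` cycle-active) appropriately, then
connectivity across any `Y ⊆ {X, insert f X}` pair is the same. -/
lemma conn_toggle {X Y Y' : Set E} {f e : E}
    (hY : Y = X ∨ Y = insert f X) (hY' : Y' = X ∨ Y' = insert f X)
    (hiff : G.conn (insert f X) (G.src e) (G.tgt e) ↔ G.conn X (G.src e) (G.tgt e)) :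
    (G.conn Y (G.src e) (G.tgt e) ↔ G.conn Y' (G.src e) (G.tgt e)) := by
  rcases hY with rfl | rfl <;> rcases hY' with rfl | rfl <;> tauto

lemma key_toggle {S S' : Set E} {f : E} (hagree : ∀ g, g ≠ f → (g ∈ S ↔ g ∈ S'))
    (hf : f ∈ G.Iact S ∪ G.Lact S) (e : E) :
    (e ∈ G.Iact S' ↔ e ∈ G.Iact S) ∧ (e ∈ G.Lact S' ↔ e ∈ G.Lact S) := by
  rcases lt_trichotomy e f with hef | rfl | hfe
  · -- e < f : the interesting case
    set X : Set E := Wset S e \ {f} with hX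
    set XZ : Set E := Zset S e \ {f} with hXZ
    have hXS' : Wset S' e \ {f} = X := by
      ext g
      simp only [hX, Wset, Set.mem_diff, Set.mem_union, Set.mem_singleton_iff,
        Set.mem_setOf_eq, Set.mem_diff]
      constructor
      · rintro ⟨h1, h2⟩
        refine ⟨?_, h2⟩
        rcases h1 with ⟨hS, hne⟩ | hlt
        · exact Or.inl ⟨(hagree g h2).mpr hS, hne⟩
        · exact Or.inr hlt
      · rintro ⟨h1, h2⟩
        refine ⟨?_, h2⟩
        rcases h1 with ⟨hS, hne⟩ | hlt
        · exact Or.inl ⟨(hagree g h2).mp hS, hne⟩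
        · exact Or.inr hlt
    have hXZS' : Zset S' e \ {f} = XZ := by
      ext g
      simp only [hXZ, Zset, Set.mem_diff, Set.mem_inter_iff, Set.mem_singleton_iff,
        Set.mem_setOf_eq]
      constructor
      · rintro ⟨⟨⟨hS, hne⟩, hlt⟩, h2⟩
        exact ⟨⟨⟨(hagree g h2).mpr hS, hne⟩, hlt⟩, h2⟩
      · rintro ⟨⟨⟨hS, hne⟩, hlt⟩, h2⟩
        exact ⟨⟨⟨(hagree g h2).mp hS, hne⟩, hlt⟩, h2⟩
    have hWopt : ∀ T : Set E, Wset T e = (Wset T e \ {f}) ∨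
        Wset T e = insert f (Wset T e \ {f}) := by
      intro T
      by_cases hfT : f ∈ Wset T e
      · right
        rw [Set.insert_diff_singleton, Set.insert_eq_self.mpr hfT]
      · left
        rw [Set.diff_singleton_eq_self hfT]
    have hiffW : G.conn (insert f X) (G.src e) (G.tgt e) ↔
        G.conn X (G.src e) (G.tgt e) := by
      rcases hf with hfI | hfL
      · refine conn_insert_iff_of_blocked (Iact_iff.mp hfI) ?_
        rintro g hg
        rcases Set.mem_insert_iff.mp hg with rfl | hgX
        · exact Or.inr hef
        · rcases hgX.1 with ⟨hS, hne⟩ | hlt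
          · exact Or.inl ⟨hS, hgX.2⟩
          · exact Or.inr (lt_trans hlt hef)
      · refine conn_insert_iff (conn_mono ?_ (Lact_iff.mp hfL))
        rintro g ⟨⟨hS, hne⟩, hlt⟩
        refine ⟨Or.inl ⟨hS, fun hge => ?_⟩, fun hgf => hne hgf⟩
        · exact absurd (hge ▸ hlt) (not_lt.mpr (le_of_lt hef))
    have hiffZ : G.conn (insert f XZ) (G.src e) (G.tgt e) ↔
        G.conn XZ (G.src e) (G.tgt e) := by
      rcases hf with hfI | hfL
      · refine conn_insert_iff_of_blocked (Iact_iff.mp hfI) ?_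
        rintro g hg
        rcases Set.mem_insert_iff.mp hg with rfl | hgX
        · exact Or.inr hef
        · exact Or.inl ⟨hgX.1.1.1, hgX.2⟩
      · refine conn_insert_iff (conn_mono ?_ (Lact_iff.mp hfL))
        rintro g ⟨⟨hS, hne⟩, hlt⟩
        exact ⟨⟨⟨hS, fun hge => absurd (hge ▸ hlt) (not_lt.mpr (le_of_lt hef))⟩,
          lt_trans hef hlt⟩, fun hgf => hne hgf⟩
    have hZopt : ∀ T : Set E, Zset T e = (Zset T e \ {f}) ∨
        Zset T e = insert f (Zset T e \ {f}) := by
      intro T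
      by_cases hfT : f ∈ Zset T e
      · right
        rw [Set.insert_diff_singleton, Set.insert_eq_self.mpr hfT]
      · left
        rw [Set.diff_singleton_eq_self hfT]
    constructor
    · rw [Iact_iff, Iact_iff]
      have h1 := hWopt S
      have h2 := hWopt S'
      rw [hXS'] at h2
      exact not_congr (conn_toggle h2 h1 hiffW)
    · rw [Lact_iff, Lact_iff]
      have h1 := hZopt S
      have h2 := hZopt S'
      rw [hXZS'] at h2
      exact conn_toggle h2 h1 hiffZ
  · -- e = f
    have hW : Wset S' e = Wset S e := by
      ext g
      simp only [Wset, Set.mem_union, Set.mem_diff, Set.mem_singleton_iff, Set.mem_setOf_eq]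
      constructor
      · rintro (⟨hS, hne⟩ | hlt)
        · exact Or.inl ⟨(hagree g hne).mpr hS, hne⟩
        · exact Or.inr hlt
      · rintro (⟨hS, hne⟩ | hlt)
        · exact Or.inl ⟨(hagree g hne).mp hS, hne⟩
        · exact Or.inr hlt
    have hZ : Zset S' e = Zset S e := by
      ext g
      simp only [Zset, Set.mem_inter_iff, Set.mem_diff, Set.mem_singleton_iff,
        Set.mem_setOf_eq]
      constructor
      · rintro ⟨⟨hS, hne⟩, hlt⟩
        exact ⟨⟨(hagree g hne).mpr hS, hne⟩, hlt⟩
      · rintro ⟨⟨hS, hne⟩, hlt⟩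
        exact ⟨⟨(hagree g hne).mp hS, hne⟩, hlt⟩
    rw [Iact_iff, Iact_iff, Lact_iff, Lact_iff, hW, hZ]
    exact ⟨Iff.rfl, Iff.rfl⟩
  · -- f < e
    have hW : Wset S' e = Wset S e := by
      ext g
      simp only [Wset, Set.mem_union, Set.mem_diff, Set.mem_singleton_iff, Set.mem_setOf_eq]
      by_cases hgf : g = f
      · subst hgf
        simp [hfe]
      · constructor
        · rintro (⟨hS, hne⟩ | hlt)
          · exact Or.inl ⟨(hagree g hgf).mpr hS, hne⟩
          · exact Or.inr hlt
        · rintro (⟨hS, hne⟩ | hlt)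
          · exact Or.inl ⟨(hagree g hgf).mp hS, hne⟩
          · exact Or.inr hlt
    have hZ : Zset S' e = Zset S e := by
      ext g
      simp only [Zset, Set.mem_inter_iff, Set.mem_diff, Set.mem_singleton_iff,
        Set.mem_setOf_eq]
      by_cases hgf : g = f
      · subst hgf
        constructor
        · rintro ⟨_, hlt⟩
          exact absurd hlt (not_lt.mpr (le_of_lt hfe))
        · rintro ⟨_, hlt⟩
          exact absurd hlt (not_lt.mpr (le_of_lt hfe))
      · constructor
        · rintro ⟨⟨hS, hne⟩, hlt⟩
          exact ⟨⟨(hagree g hgf).mpr hS, hne⟩, hlt⟩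
        · rintro ⟨⟨hS, hne⟩, hlt⟩
          exact ⟨⟨(hagree g hgf).mp hS, hne⟩, hlt⟩
    rw [Iact_iff, Iact_iff, Lact_iff, Lact_iff, hW, hZ]
    exact ⟨Iff.rfl, Iff.rfl⟩

lemma key_toggle_sets {S S' : Set E} {f : E} (hagree : ∀ g, g ≠ f → (g ∈ S ↔ g ∈ S'))
    (hf : f ∈ G.Iact S ∪ G.Lact S) :
    G.Iact S' = G.Iact S ∧ G.Lact S' = G.Lact S :=
  ⟨Set.ext fun e => (key_toggle hagree hf e).1, Set.ext fun e => (key_toggle hagree hf e).2⟩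

lemma act_invar_finset (A : Finset E) : ∀ S : Set E, (↑A : Set E) ⊆ G.Iact S ∪ G.Lact S →
    G.Iact (symmDiff S ↑A) = G.Iact S ∧ G.Lact (symmDiff S ↑A) = G.Lact S := by
  classical
  induction A using Finset.induction_on with
  | empty =>
    intro S _
    rw [Finset.coe_empty, show (∅ : Set E) = ⊥ from rfl, symmDiff_bot]
    exact ⟨rfl, rfl⟩
  | @insert f A hfA ih =>
    intro S hsub
    have hf : f ∈ G.Iact S ∪ G.Lact S := hsub (by simp)
    set S₁ : Set E := symmDiff S {f} with hS₁
    have hagree : ∀ g, g ≠ f → (g ∈ S ↔ g ∈ S₁) := by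
      intro g hg
      simp [hS₁, Set.mem_symmDiff, hg]
    obtain ⟨hI₁, hL₁⟩ := key_toggle_sets hagree hf
    have hA₁ : (↑A : Set E) ⊆ G.Iact S₁ ∪ G.Lact S₁ := by
      rw [hI₁, hL₁]
      exact fun g hg => hsub (by simp [hg])
    obtain ⟨hI₂, hL₂⟩ := ih S₁ hA₁
    have hrw : symmDiff S ↑(insert f A) = symmDiff S₁ ↑A := by
      rw [hS₁, symmDiff_assoc]
      congr 1
      rw [Finset.coe_insert]
      ext g
      simp only [Set.mem_symmDiff, Set.mem_singleton_iff, Finset.mem_coe,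
        Set.mem_insert_iff]
      constructor
      · rintro (rfl | hg)
        · exact Or.inl ⟨rfl, fun h => hfA h⟩
        · exact Or.inr ⟨hg, fun h => hfA (h ▸ hg)⟩
      · rintro (⟨rfl, _⟩ | ⟨hg, hne⟩)
        · exact Or.inl rfl
        · exact Or.inr hg
  
    rw [hrw, hI₂, hL₂, hI₁, hL₁]
    exact ⟨rfl, rfl⟩

end Toggle

section Counting

variable [Fintype V] [Fintype E] [LinearOrder E]

lemma count_I_aux : ∀ (n : ℕ) (S : Finset E), Sᶜ.card = n →
    G.kappa ↑S = G.kappa Set.univ + (G.Iact ↑S \ ↑S).ncard := by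
  intro n
  induction n with
  | zero =>
    intro S hS
    have hSuniv : S = Finset.univ := by
      have := Finset.card_eq_zero.mp hS
      rwa [Finset.compl_eq_empty_iff] at this
    subst hSuniv
    rw [Finset.coe_univ]
    simp
  | succ n ih =>
    intro S hS
    have hne : Sᶜ.Nonempty := Finset.card_pos.mp (by omega)
    set e := Sᶜ.min' hne with he
    have heS : e ∉ S := by
      have := Sᶜ.min'_mem hne
      simpa using this
    have hmin : ∀ g, g ∉ S → e ≤ g := by
      intro g hg
      exact Sᶜ.min'_le g (by simpa using hg)
    set S' : Finset E := insert e S with hS'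
    have hcard : S'ᶜ.card = n := by
      rw [hS', Finset.compl_insert, Finset.card_erase_of_mem (by simpa using heS)]
      omega
    have hcoe : (↑S' : Set E) = insert e ↑S := by
      rw [hS', Finset.coe_insert]
    have ihS' := ih S' hcard
    -- (b) e ∈ Iact ↑S ↔ ¬ conn ↑S
    have hWe : Wset (↑S : Set E) e = ↑S := by
      ext g
      simp only [Wset, Set.mem_union, Set.mem_diff, Set.mem_singleton_iff,
        Set.mem_setOf_eq, Finset.mem_coe]
      constructor
      · rintro (⟨hg, _⟩ | hlt)
        · exact hg
        · by_contra hgS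
          exact absurd (hmin g hgS) (not_le.mpr hlt)
      · intro hg
        exact Or.inl ⟨hg, fun hge => heS (hge ▸ hg)⟩
    have hbe : e ∈ G.Iact (↑S : Set E) ↔ ¬ G.conn ↑S (G.src e) (G.tgt e) := by
      rw [Iact_iff, hWe]
    -- (c) for g ∉ S', activity unchanged
    have hc : ∀ g, g ∉ S' → (g ∈ G.Iact (↑S : Set E) ↔ g ∈ G.Iact (↑S' : Set E)) := by
      intro g hg
      have hge : g ≠ e := fun h => hg (h ▸ Finset.mem_insert_self e S)
      have hgS : g ∉ S := fun h => hg (Finset.mem_insert_of_mem h)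
      have helt : e < g := lt_of_le_of_ne (hmin g hgS) (Ne.symm hge)
      have hWeq : Wset (↑S : Set E) g = Wset (↑S' : Set E) g := by
        ext h
        simp only [Wset, Set.mem_union, Set.mem_diff, Set.mem_singleton_iff,
          Set.mem_setOf_eq, Finset.mem_coe, hS', Finset.mem_insert]
        by_cases hhe : h = e
        · subst hhe
          simp [helt]
        · constructor
          · rintro (⟨h1, h2⟩ | hlt)
            · exact Or.inl ⟨Or.inr h1, h2⟩
            · exact Or.inr hlt
          · rintro (⟨h1, h2⟩ | hlt)
            · rcases h1 with h1 | h1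
              · exact absurd h1 hhe
              · exact Or.inl ⟨h1, h2⟩
            · exact Or.inr hlt
      rw [Iact_iff, Iact_iff, hWeq]
    by_cases hconn : G.conn (↑S : Set E) (G.src e) (G.tgt e)
    · have hkap : G.kappa ↑S' = G.kappa ↑S := by
        rw [hcoe]; exact kappa_insert_of_conn hconn
      have hset : G.Iact (↑S : Set E) \ ↑S = G.Iact (↑S' : Set E) \ ↑S' := by
        ext g
        simp only [Set.mem_diff, Finset.mem_coe]
        constructor
        · rintro ⟨hgI, hgS⟩
          have hge : g ≠ e := by
            rintro rfl
            exact (hbe.mp hgI) hconn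
          have hgS' : g ∉ S' := by
            rw [hS', Finset.mem_insert]
            rintro (h | h)
            exacts [hge h, hgS h]
          exact ⟨(hc g hgS').mp hgI, hgS'⟩
        · rintro ⟨hgI, hgS'⟩
          exact ⟨(hc g hgS').mpr hgI, fun h => hgS' (hS' ▸ Finset.mem_insert_of_mem h)⟩
      rw [hset, ← hkap]
      exact ihS'
    · have hkap : G.kappa ↑S = G.kappa ↑S' + 1 := by
        rw [hcoe]; exact kappa_insert_of_not_conn hconn
      have heI : e ∈ G.Iact (↑S : Set E) := hbe.mpr hconn
      have hset : G.Iact (↑S : Set E) \ ↑S = insert e (G.Iact (↑S' : Set E) \ ↑S') := by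
        ext g
        simp only [Set.mem_diff, Finset.mem_coe, Set.mem_insert_iff]
        constructor
        · rintro ⟨hgI, hgS⟩
          by_cases hge : g = e
          · exact Or.inl hge
          · have hgS' : g ∉ S' := by
              rw [hS', Finset.mem_insert]
              rintro (h | h)
              exacts [hge h, hgS h]
            exact Or.inr ⟨(hc g hgS').mp hgI, hgS'⟩
        · rintro (rfl | ⟨hgI, hgS'⟩)
          · exact ⟨heI, heS⟩
          · exact ⟨(hc g hgS').mpr hgI,
              fun h => hgS' (hS' ▸ Finset.mem_insert_of_mem h)⟩
      have hnotmem : e ∉ G.Iact (↑S' : Set E) \ ↑S' := by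
        rintro ⟨_, h⟩
        exact h (hS' ▸ Finset.mem_insert_self e S)
      rw [hset, Set.ncard_insert_of_notMem hnotmem (Set.toFinite _), hkap, ihS']
      omega

lemma count_I (S : Finset E) :
    G.kappa ↑S = G.kappa Set.univ + (G.Iact ↑S \ ↑S).ncard :=
  count_I_aux _ S rfl

lemma count_L_aux : ∀ (n : ℕ) (S : Finset E), S.card = n →
    S.card + G.kappa ↑S = Fintype.card V + (G.Lact ↑S ∩ ↑S).ncard := by
  intro n
  induction n with
  | zero =>
    intro S hS
    have : S = ∅ := Finset.card_eq_zero.mp hS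
    subst this
    rw [Finset.coe_empty]
    have : G.kappa (∅ : Set E) = Fintype.card V := by
      rw [kappa_empty, Nat.card_eq_fintype_card]
    simp [this]
  | succ n ih =>
    intro S hS
    have hne : S.Nonempty := Finset.card_pos.mp (by omega)
    set e := S.min' hne with he
    have heS : e ∈ S := S.min'_mem hne
    have hmin : ∀ g ∈ S, e ≤ g := fun g hg => S.min'_le g hg
    set S' : Finset E := S.erase e with hS'
    have hcard : S'.card = n := by
      rw [hS', Finset.card_erase_of_mem heS]; omega
    have hcoe : (↑S : Set E) = insert e ↑S' := by
      rw [hS', Finset.coe_erase, Set.insert_diff_singleton,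
        Set.insert_eq_self.mpr (Finset.mem_coe.mpr heS)]
    have ihS' := ih S' hcard
    have heS' : e ∉ S' := Finset.notMem_erase e S
    -- (b) e ∈ Lact ↑S ↔ conn ↑S'
    have hZe : Zset (↑S : Set E) e = ↑S' := by
      ext g
      simp only [Zset, Set.mem_inter_iff, Set.mem_diff, Set.mem_singleton_iff,
        Set.mem_setOf_eq, Finset.mem_coe, hS', Finset.mem_erase]
      constructor
      · rintro ⟨⟨h1, h2⟩, _⟩
        exact ⟨h2, h1⟩
      · rintro ⟨h1, h2⟩
        exact ⟨⟨h2, h1⟩, lt_of_le_of_ne (hmin g h2) (Ne.symm h1)⟩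
    have hbe : e ∈ G.Lact (↑S : Set E) ↔ G.conn ↑S' (G.src e) (G.tgt e) := by
      rw [Lact_iff, hZe]
    -- (c) for g ∈ S', activity unchanged
    have hc : ∀ g ∈ S', (g ∈ G.Lact (↑S : Set E) ↔ g ∈ G.Lact (↑S' : Set E)) := by
      intro g hg
      have hge : g ≠ e := (Finset.mem_erase.mp (hS' ▸ hg)).1
      have helt : e < g := lt_of_le_of_ne (hmin g (Finset.mem_of_mem_erase (hS' ▸ hg)))
        (Ne.symm hge)
      have hZeq : Zset (↑S : Set E) g = Zset (↑S' : Set E) g := by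
        ext h
        simp only [Zset, Set.mem_inter_iff, Set.mem_diff, Set.mem_singleton_iff,
          Set.mem_setOf_eq, Finset.mem_coe, hS', Finset.mem_erase]
        by_cases hhe : h = e
        · subst hhe
          constructor
          · rintro ⟨_, hlt⟩
            exact absurd hlt (not_lt.mpr (le_of_lt helt))
          · rintro ⟨⟨⟨hne, _⟩, _⟩, _⟩
            exact absurd rfl hne
        · constructor
          · rintro ⟨⟨h1, h2⟩, hlt⟩
            exact ⟨⟨⟨hhe, h1⟩, h2⟩, hlt⟩
          · rintro ⟨⟨⟨_, h1⟩, h2⟩, hlt⟩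
            exact ⟨⟨h1, h2⟩, hlt⟩
      rw [Lact_iff, Lact_iff, hZeq]
    have hcardS : S.card = S'.card + 1 := by omega
    by_cases hconn : G.conn (↑S' : Set E) (G.src e) (G.tgt e)
    · have hkap : G.kappa ↑S = G.kappa ↑S' := by
        rw [hcoe]; exact kappa_insert_of_conn hconn
      have heL : e ∈ G.Lact (↑S : Set E) := hbe.mpr hconn
      have hset : G.Lact (↑S : Set E) ∩ ↑S = insert e (G.Lact (↑S' : Set E) ∩ ↑S') := by
        ext g
        simp only [Set.mem_inter_iff, Finset.mem_coe, Set.mem_insert_iff]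
        constructor
        · rintro ⟨hgL, hgS⟩
          by_cases hge : g = e
          · exact Or.inl hge
          · have hgS' : g ∈ S' := hS' ▸ Finset.mem_erase.mpr ⟨hge, hgS⟩
            exact Or.inr ⟨(hc g hgS').mp hgL, hgS'⟩
        · rintro (rfl | ⟨hgL, hgS'⟩)
          · exact ⟨heL, heS⟩
          · exact ⟨(hc g hgS').mpr hgL, Finset.mem_of_mem_erase (hS' ▸ hgS')⟩
      have hnotmem : e ∉ G.Lact (↑S' : Set E) ∩ ↑S' := by
        rintro ⟨_, h⟩
        exact heS' h
      rw [hset, Set.ncard_insert_of_notMem hnotmem (Set.toFinite _), hkap, hcardS]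
      omega
    · have hkap : G.kappa ↑S' = G.kappa ↑S + 1 := by
        rw [hcoe]; exact kappa_insert_of_not_conn hconn
      have hset : G.Lact (↑S : Set E) ∩ ↑S = G.Lact (↑S' : Set E) ∩ ↑S' := by
        ext g
        simp only [Set.mem_inter_iff, Finset.mem_coe]
        constructor
        · rintro ⟨hgL, hgS⟩
          have hge : g ≠ e := by
            rintro rfl
            exact hconn (hbe.mp hgL)
          have hgS' : g ∈ S' := hS' ▸ Finset.mem_erase.mpr ⟨hge, hgS⟩
          exact ⟨(hc g hgS').mp hgL, hgS'⟩
        · rintro ⟨hgL, hgS'⟩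
          exact ⟨(hc g hgS').mpr hgL, Finset.mem_of_mem_erase (hS' ▸ hgS')⟩
      rw [hset, hcardS]
      omega

lemma count_L (S : Finset E) :
    S.card + G.kappa ↑S = Fintype.card V + (G.Lact ↑S ∩ ↑S).ncard :=
  count_L_aux _ S rfl

end Counting

section Final

open Finset

variable [Fintype V] [Fintype E] [LinearOrder E]

variable (G) in
/-- Cut-active edges, as a `Finset`. -/
noncomputable def IF (S : Finset E) : Finset E := (Set.toFinite (G.Iact ↑S)).toFinset

variable (G) in
/-- Cycle-active edges, as a `Finset`. -/
noncomputable def LF (S : Finset E) : Finset E := (Set.toFinite (G.Lact ↑S)).toFinset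

lemma mem_IF {S : Finset E} {e : E} : e ∈ IF G S ↔ e ∈ G.Iact ↑S :=
  Set.Finite.mem_toFinset _

lemma mem_LF {S : Finset E} {e : E} : e ∈ LF G S ↔ e ∈ G.Lact ↑S :=
  Set.Finite.mem_toFinset _

lemma IF_LF_disj {S : Finset E} {e : E} (h1 : e ∈ IF G S) (h2 : e ∈ LF G S) : False :=
  Iact_Lact_disjoint (mem_IF.mp h1) (mem_LF.mp h2)

variable (G) in
/-- The toggled part carrying `S` to its interval representative. -/
noncomputable def DS (S : Finset E) : Finset E :=
  (IF G S \ S) ∪ (LF G S ∩ S)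

variable (G) in
/-- The canonical representative of the activity interval of `S`. -/
noncomputable def rep (S : Finset E) : Finset E :=
  symmDiff S (DS G S)

lemma coe_symmDiff_finset (S A : Finset E) :
      ((symmDiff S A : Finset E) : Set E) = symmDiff (↑S : Set E) ↑A := by
  classical
  ext e
  simp [Finset.mem_symmDiff, Set.mem_symmDiff]

lemma act_finset_invar {S A : Finset E} (hA : A ⊆ IF G S ∪ LF G S) :
      IF G (symmDiff S A) = IF G S ∧ LF G (symmDiff S A) = LF G S := by
  classical
  have hsub : (↑A : Set E) ⊆ G.Iact ↑S ∪ G.Lact ↑S := by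
    intro e he
    rcases Finset.mem_union.mp (hA he) with h | h
    · exact Or.inl (mem_IF.mp h)
    · exact Or.inr (mem_LF.mp h)
  obtain ⟨hI, hL⟩ := act_invar_finset A (↑S) hsub
  rw [← coe_symmDiff_finset] at hI hL
  constructor
  · ext e; rw [mem_IF, mem_IF, hI]
  · ext e; rw [mem_LF, mem_LF, hL]

lemma DS_subset (S : Finset E) : DS G S ⊆ IF G S ∪ LF G S := by
  classical
  intro e he
  rcases Finset.mem_union.mp he with h | h
  · exact Finset.mem_union_left _ (Finset.mem_sdiff.mp h).1
  · exact Finset.mem_union_right _ (Finset.mem_inter.mp h).1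

lemma rep_def (S : Finset E) : rep G S = symmDiff S (DS G S) := rfl

lemma DS_def (S : Finset E) : DS G S = (IF G S \ S) ∪ (LF G S ∩ S) := rfl

set_option maxHeartbeats 1000000 in
lemma rep_symmDiff {S A : Finset E} (hA : A ⊆ IF G S ∪ LF G S) :
      rep G (symmDiff S A) = rep G S := by
  obtain ⟨hI, hL⟩ := act_finset_invar hA
  rw [rep_def, rep_def, DS_def, DS_def, hI, hL]
  ext e
  have h1 : ¬ (e ∈ IF G S ∧ e ∈ LF G S) := fun ⟨a, b⟩ => IF_LF_disj a b
  have h2 : e ∈ A → e ∈ IF G S ∨ e ∈ LF G S := fun h => Finset.mem_union.mp (hA h)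
  simp only [Finset.mem_symmDiff, Finset.mem_union, Finset.mem_sdiff, Finset.mem_inter]
  tauto

lemma rep_acts (S : Finset E) :
    IF G (rep G S) = IF G S ∧ LF G (rep G S) = LF G S :=
  act_finset_invar (DS_subset S)

lemma rep_idem (S : Finset E) : rep G (rep G S) = rep G S :=
  rep_symmDiff (DS_subset S)

lemma symmDiff_rep (S : Finset E) :
      symmDiff S (rep G S) = DS G S := by
  rw [rep_def]
  exact symmDiff_symmDiff_cancel_left S (DS G S)

lemma rep_fixed {T : Finset E} (hT : rep G T = T) :
    IF G T ⊆ T ∧ ∀ e ∈ LF G T, e ∉ T := by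
  classical
  have hD : DS G T = ∅ := by
    have h := hT
    rw [rep_def, symmDiff_eq_left] at h
    exact h
  rw [DS_def, Finset.union_eq_empty] at hD
  constructor
  · exact Finset.sdiff_eq_empty_iff_subset.mp hD.1
  · intro e heL heT
    have : e ∈ LF G T ∩ T := Finset.mem_inter.mpr ⟨heL, heT⟩
    rw [hD.2] at this
    exact absurd this (Finset.notMem_empty e)

end Final

section Main

open Finset

variable [Fintype V] [Fintype E] [LinearOrder E] {R : Type} [CommRing R]

lemma prod_ite_card {I L A : Finset E} (hA : A ⊆ I ∪ L)
    (hd : ∀ e, e ∈ I → e ∈ L → False) (p q : R) :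
    (∏ i ∈ A, (if i ∈ I then p else q)) = p ^ (I ∩ A).card * q ^ (L ∩ A).card := by
  have h1 : A.filter (fun i => i ∈ I) = I ∩ A := by
    rw [Finset.filter_mem_eq_inter, Finset.inter_comm]
  have h2 : A.filter (fun i => ¬ i ∈ I) = L ∩ A := by
    ext e
    simp only [mem_filter, mem_inter]
    constructor
    · rintro ⟨he, hni⟩
      rcases mem_union.mp (hA he) with h | h
      · exact absurd h hni
      · exact ⟨h, he⟩
    · rintro ⟨hl, ha⟩
      exact ⟨ha, fun hi => hd e hi hl⟩
  rw [Finset.prod_ite, h1, h2, Finset.prod_const, Finset.prod_const]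

set_option maxHeartbeats 1000000 in
lemma sum_eq (x w y z : R) :
    ∑ S : Finset E, (x + w - 1) ^ ((G.Iact ↑S \ ↑S).ncard) *
        (y + z - 1) ^ ((G.Lact ↑S ∩ ↑S).ncard)
      = ∑ S : Finset E, x ^ ((G.Iact ↑S ∩ ↑S).ncard) * w ^ ((G.Iact ↑S \ ↑S).ncard) *
          y ^ ((G.Lact ↑S \ ↑S).ncard) * z ^ ((G.Lact ↑S ∩ ↑S).ncard) := by
  have hIi : ∀ S : Finset E, (G.Iact ↑S ∩ ↑S).ncard = (IF G S ∩ S).card := by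
    intro S
    have h : G.Iact ↑S ∩ ↑S = ↑(IF G S ∩ S) := by
      ext e; simp [Finset.coe_inter, mem_IF]
    rw [h, Set.ncard_coe_finset]
  have hId : ∀ S : Finset E, (G.Iact ↑S \ ↑S).ncard = (IF G S \ S).card := by
    intro S
    have h : G.Iact ↑S \ ↑S = ↑(IF G S \ S) := by
      ext e; simp [Finset.coe_sdiff, mem_IF]
    rw [h, Set.ncard_coe_finset]
  have hLi : ∀ S : Finset E, (G.Lact ↑S ∩ ↑S).ncard = (LF G S ∩ S).card := by
    intro S
    have h : G.Lact ↑S ∩ ↑S = ↑(LF G S ∩ S) := by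
      ext e; simp [Finset.coe_inter, mem_LF]
    rw [h, Set.ncard_coe_finset]
  have hLd : ∀ S : Finset E, (G.Lact ↑S \ ↑S).ncard = (LF G S \ S).card := by
    intro S
    have h : G.Lact ↑S \ ↑S = ↑(LF G S \ S) := by
      ext e; simp [Finset.coe_sdiff, mem_LF]
    rw [h, Set.ncard_coe_finset]
  have hstep1 : ∑ S : Finset E, (x + w - 1) ^ ((G.Iact ↑S \ ↑S).ncard) *
      (y + z - 1) ^ ((G.Lact ↑S ∩ ↑S).ncard)
      = ∑ S : Finset E, (x + w - 1) ^ (IF G S \ S).card *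
          (y + z - 1) ^ (LF G S ∩ S).card :=
    Finset.sum_congr rfl fun S _ => by rw [hId, hLi]
  have hstep2 : ∑ S : Finset E, x ^ (IF G S ∩ S).card * w ^ (IF G S \ S).card *
      y ^ (LF G S \ S).card * z ^ (LF G S ∩ S).card
      = ∑ S : Finset E, x ^ ((G.Iact ↑S ∩ ↑S).ncard) * w ^ ((G.Iact ↑S \ ↑S).ncard) *
          y ^ ((G.Lact ↑S \ ↑S).ncard) * z ^ ((G.Lact ↑S ∩ ↑S).ncard) :=
    Finset.sum_congr rfl fun S _ => by rw [hIi, hId, hLi, hLd]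
  rw [hstep1, ← hstep2]
  -- the core identity, via the interval partition
  set F₁ : Finset E → R := fun S => (x + w - 1) ^ (IF G S \ S).card *
      (y + z - 1) ^ (LF G S ∩ S).card with hF₁
  set F₂ : Finset E → R := fun S => x ^ (IF G S ∩ S).card * w ^ (IF G S \ S).card *
      y ^ (LF G S \ S).card * z ^ (LF G S ∩ S).card with hF₂
  rw [← Finset.sum_fiberwise Finset.univ (rep G) F₁,
    ← Finset.sum_fiberwise Finset.univ (rep G) F₂]
  refine Finset.sum_congr rfl fun T _ => ?_
  rcases Finset.eq_empty_or_nonempty (Finset.univ.filter (fun S => rep G S = T)) with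
    hemp | ⟨S₀, hS₀⟩
  · rw [hemp, Finset.sum_empty, Finset.sum_empty]
  · have hS₀rep : rep G S₀ = T := (Finset.mem_filter.mp hS₀).2
    have hTT : rep G T = T := by rw [← hS₀rep, rep_idem]
    set I : Finset E := IF G T with hI
    set L : Finset E := LF G T with hL
    obtain ⟨hIT, hLT⟩ := rep_fixed hTT
    have hdisj : ∀ e, e ∈ I → e ∈ L → False := fun e h1 h2 => IF_LF_disj h1 h2
    have hinj : ∀ A ∈ (I ∪ L).powerset, ∀ B ∈ (I ∪ L).powerset,
        symmDiff T A = symmDiff T B → A = B := by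
      intro A _ B _ h
      have := congrArg (fun t => symmDiff T t) h
      simpa [symmDiff_symmDiff_cancel_left] using this
    have hfilter : Finset.univ.filter (fun S => rep G S = T)
        = (I ∪ L).powerset.image (fun A => symmDiff T A) := by
      ext S'
      simp only [Finset.mem_filter, Finset.mem_univ, true_and, Finset.mem_image,
        Finset.mem_powerset]
      constructor
      · intro hrep
        have hIS' : IF G S' = I := by rw [hI, ← hrep]; exact (rep_acts S').1.symm
        have hLS' : LF G S' = L := by rw [hL, ← hrep]; exact (rep_acts S').2.symm
        refine ⟨symmDiff S' T, ?_, ?_⟩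
        · have h1 : symmDiff S' T = DS G S' := by rw [← hrep]; exact symmDiff_rep S'
          have h2 := DS_subset (G := G) S'
          rw [hIS', hLS'] at h2
          rw [h1]
          exact h2
        · rw [symmDiff_comm S' T]
          exact symmDiff_symmDiff_cancel_left T S'
      · rintro ⟨A, hA, rfl⟩
        have hA' : A ⊆ IF G T ∪ LF G T := hA
        rw [rep_symmDiff hA', hTT]
    rw [hfilter, Finset.sum_image hinj, Finset.sum_image hinj]
    -- membership computations for S' = T ∆ A
    have hsets : ∀ A ∈ (I ∪ L).powerset,
        IF G (symmDiff T A) ∩ (symmDiff T A) = I \ A ∧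
        IF G (symmDiff T A) \ (symmDiff T A) = I ∩ A ∧
        LF G (symmDiff T A) ∩ (symmDiff T A) = L ∩ A ∧
        LF G (symmDiff T A) \ (symmDiff T A) = L \ A := by
      intro A hA
      have hA' : A ⊆ IF G T ∪ LF G T := Finset.mem_powerset.mp hA
      obtain ⟨hIA, hLA⟩ := act_finset_invar hA'
      rw [hIA, hLA]
      refine ⟨?_, ?_, ?_, ?_⟩ <;>
      · ext e
        have h1 : e ∈ I → e ∈ T := fun h => hIT h
        have h2 : e ∈ L → e ∉ T := fun h => hLT e h
        simp only [Finset.mem_inter, Finset.mem_sdiff, Finset.mem_symmDiff]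
        constructor <;> intro h <;> tauto
    -- both sides equal a product over I ∪ L
    have hDIL : Disjoint I L := Finset.disjoint_left.mpr (fun {e} h1 h2 => hdisj e h1 h2)
    have side1 : ∑ A ∈ (I ∪ L).powerset, F₁ (symmDiff T A)
        = (x + w) ^ I.card * (y + z) ^ L.card := by
      have hterm : ∀ A ∈ (I ∪ L).powerset, F₁ (symmDiff T A)
          = (∏ i ∈ A, (if i ∈ I then x + w - 1 else y + z - 1)) *
            (∏ i ∈ (I ∪ L) \ A, (1 : R)) := by
        intro A hA
        obtain ⟨_, hb, hc, _⟩ := hsets A hA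
        rw [hF₁]
        simp only
        rw [hb, hc, prod_ite_card (Finset.mem_powerset.mp hA) hdisj,
          Finset.prod_const_one, mul_one]
      rw [Finset.sum_congr rfl hterm,
        ← Finset.prod_add (fun i => if i ∈ I then x + w - 1 else y + z - 1)
          (fun _ => (1 : R)) (I ∪ L), Finset.prod_union hDIL]
      congr 1
      · rw [← Finset.prod_const (x + w)]
        refine Finset.prod_congr rfl fun i hi => by rw [if_pos hi]; ring
      · rw [← Finset.prod_const (y + z)]
        refine Finset.prod_congr rfl fun i hi => by
          rw [if_neg (fun h => hdisj i h hi)]; ring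
    have side2 : ∑ A ∈ (I ∪ L).powerset, F₂ (symmDiff T A)
        = (x + w) ^ I.card * (y + z) ^ L.card := by
      have hIcap : ∀ A ⊆ I ∪ L, I ∩ ((I ∪ L) \ A) = I \ A := by
        intro A _
        ext e
        simp only [Finset.mem_inter, Finset.mem_sdiff, Finset.mem_union]
        tauto
      have hLcap : ∀ A ⊆ I ∪ L, L ∩ ((I ∪ L) \ A) = L \ A := by
        intro A _
        ext e
        simp only [Finset.mem_inter, Finset.mem_sdiff, Finset.mem_union]
        tauto
      have hterm : ∀ A ∈ (I ∪ L).powerset, F₂ (symmDiff T A)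
          = (∏ i ∈ A, (if i ∈ I then w else z)) *
            (∏ i ∈ (I ∪ L) \ A, (if i ∈ I then x else y)) := by
        intro A hA
        have hAsub := Finset.mem_powerset.mp hA
        obtain ⟨ha, hb, hc, hd'⟩ := hsets A hA
        rw [hF₂]
        simp only
        rw [ha, hb, hc, hd', prod_ite_card hAsub hdisj,
          prod_ite_card (Finset.sdiff_subset) hdisj, hIcap A hAsub, hLcap A hAsub]
        ring
      rw [Finset.sum_congr rfl hterm,
        ← Finset.prod_add (fun i => if i ∈ I then w else z)
          (fun i => if i ∈ I then x else y) (I ∪ L), Finset.prod_union hDIL]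
      congr 1
      · rw [← Finset.prod_const (x + w)]
        refine Finset.prod_congr rfl fun i hi => by rw [if_pos hi, if_pos hi]; ring
      · rw [← Finset.prod_const (y + z)]
        refine Finset.prod_congr rfl fun i hi => by
          rw [if_neg (fun h => hdisj i h hi), if_neg (fun h => hdisj i h hi)]; ring
    rw [side1, side2]

end Main

end GTProof


/-- Gordon–Traldi generalized activities expansion:
`T_G(x̂+ŵ, ŷ+ẑ) = Σ_S x̂^{|Î(S)∩S|} ŵ^{|Î(S)\S|} ŷ^{|L̂(S)\S|} ẑ^{|L̂(S)∩S|}`. -/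
theorem gordon_traldi {V E : Type} [Fintype V] [Fintype E] [LinearOrder E]
    (G : OrGraph V E) (R : Type) [CommRing R] (x w y z : R) :
    G.tutte R (x + w) (y + z) =
      ∑ S : Finset E,
        x ^ (G.Iact ↑S ∩ ↑S).ncard * w ^ (G.Iact ↑S \ ↑S).ncard *
          y ^ (G.Lact ↑S \ ↑S).ncard * z ^ (G.Lact ↑S ∩ ↑S).ncard := by
  have hterm : ∀ S : Finset E,
      (x + w - 1) ^ (G.kappa ↑S - G.kappa Set.univ) *
        (y + z - 1) ^ (S.card + G.kappa ↑S - Fintype.card V)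
      = (x + w - 1) ^ ((G.Iact ↑S \ ↑S).ncard) *
          (y + z - 1) ^ ((G.Lact ↑S ∩ ↑S).ncard) := by
    intro S
    have h1 := GTProof.count_I (G := G) S
    have h2 := GTProof.count_L (G := G) S
    have e1 : G.kappa ↑S - G.kappa Set.univ = (G.Iact ↑S \ ↑S).ncard := by omega
    have e2 : S.card + G.kappa ↑S - Fintype.card V = (G.Lact ↑S ∩ ↑S).ncard := by omega
    rw [e1, e2]
  unfold OrGraph.tutte
  rw [Finset.sum_congr rfl (fun S _ => hterm S)]
  exact GTProof.sum_eq x w y z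
end

section
/- Let G be a connected graph with a total order on its edges. Then T_G(x̂, ŷ) = Σ_T x̂^{|Î(T)|} ŷ^{|L̂(T)|}, where the sum is over spanning trees T of G, Î(T) is the set of internally active edges of T, and L̂(T) is the set of externally active edges of T. -/
open scoped Classical

/-- A multigraph with a fixed reference orientation: each edge `e` has a
source `src e` and a target `tgt e` (the positive direction `e⁺ = (src e, tgt e)`). -/
structure RefGraph (V E : Type) where
  src : E → V
  tgt : E → V

namespace RefGraph

variable {V E : Type} (G : RefGraph V E)

/-- Two vertices are joined by some edge of `S`. -/
def step (S : Set E) (a b : V) : Prop :=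
  ∃ e ∈ S, (G.src e = a ∧ G.tgt e = b) ∨ (G.src e = b ∧ G.tgt e = a)

/-- `κ(S)`: the number of connected components of the spanning subgraph `(V, S)`. -/
noncomputable def kappa (S : Set E) : ℕ :=
  Nat.card (Quot (G.step S))

/-- A cut of `G`: a minimal nonempty edge set whose removal increases the
number of connected components. -/
def IsCut (C : Set E) : Prop :=
  C.Nonempty ∧ G.kappa Cᶜ > G.kappa Set.univ ∧
    ∀ C' : Set E, C' ⊂ C → C'.Nonempty → ¬ (G.kappa C'ᶜ > G.kappa Set.univ)

/-- A cycle of `G`: a minimal nonempty edge set meeting no cut of `G` in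
precisely one element. -/
def IsCycle (C : Set E) : Prop :=
  C.Nonempty ∧ (∀ Cu : Set E, G.IsCut Cu → (Cu ∩ C).ncard ≠ 1) ∧
    ∀ C' : Set E, C' ⊂ C → C'.Nonempty →
      ¬ (∀ Cu : Set E, G.IsCut Cu → (Cu ∩ C').ncard ≠ 1)

/-- Head of edge `e` under orientation `O` (`O e = true` means the reference
direction `src e → tgt e`). -/
def ohead (O : E → Bool) (e : E) : V := if O e then G.tgt e else G.src e

/-- Tail of edge `e` under orientation `O`. -/
def otail (O : E → Bool) (e : E) : V := if O e then G.src e else G.tgt e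

/-- Edge `e` crosses the vertex set `U` (exactly one endpoint in `U`). -/
def crossing (U : Set V) (e : E) : Prop := G.src e ∈ U ↔ G.tgt e ∉ U

/-- A directed cut of the orientation `O`: a cut all of whose edges are
oriented consistently out of some vertex set `U`. -/
def IsDirCut (O : E → Bool) (C : Set E) : Prop :=
  G.IsCut C ∧ ∃ U : Set V, (∀ e, e ∈ C ↔ G.crossing U e) ∧ ∀ e ∈ C, G.otail O e ∈ U

/-- A directed cycle of the orientation `O`: a cycle oriented consistently,
i.e. in-degree equals out-degree at each vertex within the cycle. -/
def IsDirCycle (O : E → Bool) (C : Set E) : Prop :=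
  G.IsCycle C ∧ ∀ v : V,
    {e ∈ C | G.ohead O e = v}.ncard = {e ∈ C | G.otail O e = v}.ncard

section Activities

variable [LinearOrder E]

/-- `Î(S)`: cut active edges of the spanning subgraph `S`. -/
def Iact (S : Set E) : Set E :=
  {e | ∃ C : Set E, G.IsCut C ∧ e ∈ C ∧ (∀ f ∈ C, f ≠ e → f ∉ S) ∧ ∀ f ∈ C, e ≤ f}

/-- `L̂(S)`: cycle active edges of the spanning subgraph `S`. -/
def Lact (S : Set E) : Set E :=
  {e | ∃ C : Set E, G.IsCycle C ∧ e ∈ C ∧ (∀ f ∈ C, f = e ∨ f ∈ S) ∧ ∀ f ∈ C, e ≤ f}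

/-- `I(O)`: cut active edges of the orientation `O`. -/
def Ior (O : E → Bool) : Set E :=
  {e | ∃ C : Set E, G.IsDirCut O C ∧ e ∈ C ∧ ∀ f ∈ C, e ≤ f}

/-- `L(O)`: cycle active edges of the orientation `O`. -/
def Lor (O : E → Bool) : Set E :=
  {e | ∃ C : Set E, G.IsDirCycle O C ∧ e ∈ C ∧ ∀ f ∈ C, e ≤ f}

end Activities

/-- The Tutte polynomial via the corank-nullity expansion, evaluated in a
commutative ring. -/
noncomputable def tutte [Fintype V] [Fintype E] (R : Type) [CommRing R] (x y : R) : R :=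
  ∑ S : Finset E, (x - 1) ^ (G.kappa ↑S - G.kappa Set.univ) *
    (y - 1) ^ (S.card + G.kappa ↑S - Fintype.card V)

/-! ### Fourientations.
A fourientation is `F : E → Bool × Bool`, recording whether `e⁺` resp. `e⁻`
belongs to the fourientation. -/

/-- A potential cut of the fourientation `F`: a directed cut each of whose
edges is unoriented in `F` or oriented in the cut direction (out of `U`). -/
def PotCut (F : E → Bool × Bool) (C : Set E) : Prop :=
  G.IsCut C ∧ ∃ U : Set V, (∀ e, e ∈ C ↔ G.crossing U e) ∧
    ∀ e ∈ C, (G.src e ∈ U → (F e).2 = false) ∧ (G.src e ∉ U → (F e).1 = false)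

/-- A potential cycle of the fourientation `F`, with cyclic direction `dir`:
a consistently directed cycle each of whose edges has its `dir`-direction
present in `F` (so each edge is bioriented or oriented in the cycle direction). -/
def PotCycle (F : E → Bool × Bool) (C : Set E) (dir : E → Bool) : Prop :=
  G.IsCycle C ∧
    (∀ v : V, {e ∈ C | G.ohead dir e = v}.ncard = {e ∈ C | G.otail dir e = v}.ncard) ∧
    ∀ e ∈ C, (if dir e then (F e).1 else (F e).2) = true

/-- Add the direction `d` of edge `e` to the fourientation `F`. -/
def addDir [DecidableEq E] (F : E → Bool × Bool) (e : E) (d : Bool) : E → Bool × Bool :=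
  Function.update F e (if d then (true, (F e).2) else ((F e).1, true))

/-- Remove the direction `d` of edge `e` from the fourientation `F`. -/
def remDir [DecidableEq E] (F : E → Bool × Bool) (e : E) (d : Bool) : E → Bool × Bool :=
  Function.update F e (if d then (false, (F e).2) else ((F e).1, false))

/-- `ᵉO`: toggle the status of the edge `e` in the fourientation `F`. -/
def toggle [DecidableEq E] (F : E → Bool × Bool) (e : E) : E → Bool × Bool :=
  Function.update F e ((F e).2, (F e).1)

section FourActivities

variable [LinearOrder E]

/-- `I^o(O)`: oriented edges that are minimal in some potential cut. -/
def Io (F : E → Bool × Bool) : Set E :=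
  {f | (F f).1 ≠ (F f).2 ∧ ∃ C : Set E, G.PotCut F C ∧ f ∈ C ∧ ∀ g ∈ C, f ≤ g}

/-- `L^o(O)`: oriented edges that are minimal in some potential cycle. -/
def Lo (F : E → Bool × Bool) : Set E :=
  {f | (F f).1 ≠ (F f).2 ∧
    ∃ (C : Set E) (dir : E → Bool), G.PotCycle F C dir ∧ f ∈ C ∧ ∀ g ∈ C, f ≤ g}

/-- `I^u(O)`: unoriented edges `f` minimal in some potential cut of
`O ∪ {f^{σᵤ(f)}}`. -/
def Iu (σu : E → Bool) (F : E → Bool × Bool) : Set E :=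
  {f | F f = (false, false) ∧
    ∃ C : Set E, G.PotCut (addDir F f (σu f)) C ∧ f ∈ C ∧ ∀ g ∈ C, f ≤ g}

/-- `L^b(O)`: bioriented edges `f` minimal in some potential cycle of
`O \ {f^{σ_b(f)}}`. -/
def Lb (σb : E → Bool) (F : E → Bool × Bool) : Set E :=
  {f | F f = (true, true) ∧
    ∃ (C : Set E) (dir : E → Bool),
      G.PotCycle (remDir F f (σb f)) C dir ∧ f ∈ C ∧ ∀ g ∈ C, f ≤ g}

end FourActivities

/-- The deletion `G − e`. -/
def del (e : E) : RefGraph V {f : E // f ≠ e} :=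
  ⟨fun f => G.src f.1, fun f => G.tgt f.1⟩

/-- The contraction `G/e`: identify the endpoints of `e` and remove `e`. -/
def contr (e : E) : RefGraph (Quot (fun a b => a = G.src e ∧ b = G.tgt e)) {f : E // f ≠ e} :=
  ⟨fun f => Quot.mk _ (G.src f.1), fun f => Quot.mk _ (G.tgt f.1)⟩

/-! ### Potential walks in a fourientation. A walk step is a pair `(e, d)` of an
edge and a chosen direction (`d = true` for the reference direction). -/

/-- Tail of the directed edge `(e, d)`. -/
def ftail (p : E × Bool) : V := if p.2 then G.src p.1 else G.tgt p.1

/-- Head of the directed edge `(e, d)`. -/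
def fhead (p : E × Bool) : V := if p.2 then G.tgt p.1 else G.src p.1

/-- The direction `d` of `e` is present in the fourientation `F`. -/
def present (F : E → Bool × Bool) (p : E × Bool) : Prop :=
  (if p.2 then (F p.1).1 else (F p.1).2) = true

/-- A potential walk of the fourientation `F` from `a` to `b`: each step uses
a direction present in `F` (so each edge is bioriented or oriented
consistently with the walk). -/
def IsPWalk (F : E → Bool × Bool) : V → List (E × Bool) → V → Prop
  | a, [], b => a = b
  | a, p :: rest, b => G.ftail p = a ∧ present F p ∧ IsPWalk F (G.fhead p) rest b

/-- A potential path: a potential walk visiting pairwise distinct vertices. -/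
def IsPPath (F : E → Bool × Bool) (a : V) (w : List (E × Bool)) (b : V) : Prop :=
  G.IsPWalk F a w b ∧ (a :: w.map G.fhead).Nodup

end RefGraph


/-! ### Auxiliary development -/

section AuxHelpers

theorem aux_eqvGen_iff_rtg {α : Type*} {r : α → α → Prop} (hs : Symmetric r) {a b : α} :
    Relation.EqvGen r a b ↔ Relation.ReflTransGen r a b := by
  constructor
  · intro h
    induction h with
    | rel x y h => exact Relation.ReflTransGen.single h
    | refl x => exact Relation.ReflTransGen.refl
    | symm x y _ ih => haveI : Std.Symm r := ⟨fun a b h => hs h⟩; exact Std.Symm.symm _ _ ih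
    | trans x y z _ _ ih1 ih2 => exact ih1.trans ih2
  · intro h
    induction h with
    | refl => exact Relation.EqvGen.refl _
    | tail _ h ih => exact ih.trans _ _ _ (Relation.EqvGen.rel _ _ h)

theorem aux_natCard_lt_of_surj_not_inj {α β : Type*} [Finite α] (f : α → β)
    (hs : Function.Surjective f) (hi : ¬ Function.Injective f) :
    Nat.card β < Nat.card α := by
  have : Fintype α := Fintype.ofFinite α
  have : Fintype β := Fintype.ofSurjective f hs
  rw [Nat.card_eq_fintype_card, Nat.card_eq_fintype_card]
  exact Fintype.card_lt_of_surjective_not_injective f hs hi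

theorem aux_two_le_natCard {α : Type*} [Finite α] {a b : α} (h : a ≠ b) :
    2 ≤ Nat.card α := by
  have : Fintype α := Fintype.ofFinite α
  rw [Nat.card_eq_fintype_card]
  exact Fintype.one_lt_card_iff_nontrivial.2 ⟨a, b, h⟩

end AuxHelpers

namespace RefGraph

variable {V E : Type} (G : RefGraph V E)

theorem step_symm {S : Set E} : Symmetric (G.step S) := by
  rintro a b ⟨e, he, h | h⟩
  · exact ⟨e, he, Or.inr h⟩
  · exact ⟨e, he, Or.inl h⟩

/-- Connectivity in the spanning subgraph `S`. -/
def conn (S : Set E) (a b : V) : Prop := Quot.mk (G.step S) a = Quot.mk (G.step S) b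

theorem conn_iff_rtg {S : Set E} {a b : V} :
    G.conn S a b ↔ Relation.ReflTransGen (G.step S) a b :=
  Quot.eq.trans (aux_eqvGen_iff_rtg (G.step_symm))

@[refl] theorem conn_refl {S : Set E} (a : V) : G.conn S a a := rfl

theorem conn_symm {S : Set E} {a b : V} (h : G.conn S a b) : G.conn S b a := h.symm

theorem conn_trans {S : Set E} {a b c : V} (h : G.conn S a b) (h' : G.conn S b c) :
    G.conn S a c := h.trans h'

theorem conn_of_step {S : Set E} {a b : V} (h : G.step S a b) : G.conn S a b :=
  Quot.sound h

theorem conn_mono {S S' : Set E} (hss : S ⊆ S') {a b : V} (h : G.conn S a b) :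
    G.conn S' a b := by
  rw [conn_iff_rtg] at h ⊢
  exact Relation.ReflTransGen.mono (fun x y ⟨e, he, hx⟩ => ⟨e, hss he, hx⟩) _ _ h

theorem conn_edge {S : Set E} {e : E} (he : e ∈ S) : G.conn S (G.src e) (G.tgt e) :=
  G.conn_of_step ⟨e, he, Or.inl ⟨rfl, rfl⟩⟩

/-! ### Walks -/

/-- A walk: a list of directed edge steps chained head-to-tail. -/
def Walk : List (E × Bool) → V → V → Prop
  | [], a, b => a = b
  | p :: l, a, b => G.ftail p = a ∧ Walk l (G.fhead p) b

@[simp] theorem walk_nil {a b : V} : G.Walk [] a b ↔ a = b := Iff.rfl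

@[simp] theorem walk_cons {a b : V} {p : E × Bool} {l : List (E × Bool)} :
    G.Walk (p :: l) a b ↔ G.ftail p = a ∧ G.Walk l (G.fhead p) b := Iff.rfl

theorem walk_append {a b c : V} {l1 l2 : List (E × Bool)} (h1 : G.Walk l1 a b)
    (h2 : G.Walk l2 b c) : G.Walk (l1 ++ l2) a c := by
  induction l1 generalizing a with
  | nil => rw [walk_nil] at h1; rw [List.nil_append, h1]; exact h2
  | cons p l ih => exact ⟨h1.1, ih h1.2⟩

theorem walk_split {a c : V} {l1 l2 : List (E × Bool)} (h : G.Walk (l1 ++ l2) a c) :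
    ∃ b, G.Walk l1 a b ∧ G.Walk l2 b c := by
  induction l1 generalizing a with
  | nil => exact ⟨a, rfl, h⟩
  | cons p l ih =>
    obtain ⟨b, hb1, hb2⟩ := ih h.2
    exact ⟨b, ⟨h.1, hb1⟩, hb2⟩

theorem conn_of_walk {S : Set E} {a b : V} {l : List (E × Bool)} (h : G.Walk l a b)
    (hS : ∀ p ∈ l, p.1 ∈ S) : G.conn S a b := by
  induction l generalizing a with
  | nil => rw [walk_nil] at h; rw [h]
  | cons p l ih =>
    refine G.conn_trans ?_ (ih h.2 (fun q hq => hS q (List.mem_cons_of_mem _ hq)))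
    rw [← h.1]
    have hp : p.1 ∈ S := hS p (List.mem_cons_self)
    cases hd : p.2 with
    | true => simpa [ftail, fhead, hd] using G.conn_edge hp
    | false => simpa [ftail, fhead, hd, conn] using (G.conn_edge hp).symm

theorem exists_walk_of_conn {S : Set E} {a b : V} (h : G.conn S a b) :
    ∃ l : List (E × Bool), G.Walk l a b ∧ ∀ p ∈ l, p.1 ∈ S := by
  rw [conn_iff_rtg] at h
  induction h with
  | refl => exact ⟨[], rfl, by simp⟩
  | tail _ hstep ih =>
    obtain ⟨l, hl, hlS⟩ := ih
    obtain ⟨e, he, hx | hx⟩ := hstep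
    · refine ⟨l ++ [(e, true)], G.walk_append hl ?_, ?_⟩
      · exact ⟨by simp [ftail, hx.1], by simp [fhead, hx.2]⟩
      · intro p hp
        rcases List.mem_append.1 hp with h' | h'
        · exact hlS p h'
        · simp at h'; simp [h', he]
    · refine ⟨l ++ [(e, false)], G.walk_append hl ?_, ?_⟩
      · exact ⟨by simp [ftail, hx.2], by simp [fhead, hx.1]⟩
      · intro p hp
        rcases List.mem_append.1 hp with h' | h'
        · exact hlS p h'
        · simp at h'; simp [h', he]

theorem mem_walk_endpoints {a b : V} {l : List (E × Bool)} (h : G.Walk l a b)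
    {q : E × Bool} (hq : q ∈ l) :
    G.ftail q ∈ a :: l.map G.fhead ∧ G.fhead q ∈ l.map G.fhead := by
  induction l generalizing a with
  | nil => cases hq
  | cons p l ih =>
    rcases List.mem_cons.1 hq with rfl | hq'
    · refine ⟨?_, ?_⟩
      · exact List.mem_cons.2 (Or.inl h.1)
      · exact List.mem_cons.2 (Or.inl rfl)
    · obtain ⟨h1, h2⟩ := ih h.2 hq'
      refine ⟨?_, ?_⟩
      · rcases List.mem_cons.1 h1 with h' | h'
        · exact List.mem_cons.2 (Or.inr (List.mem_cons.2 (Or.inl h')))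
        · exact List.mem_cons.2 (Or.inr (List.mem_cons.2 (Or.inr h')))
      · exact List.mem_cons.2 (Or.inr h2)

/-- Endpoints of a step with the same underlying edge agree as unordered pairs. -/
theorem step_pair_eq {p q : E × Bool} (h : q.1 = p.1) :
    (G.ftail q = G.ftail p ∧ G.fhead q = G.fhead p) ∨
      (G.ftail q = G.fhead p ∧ G.fhead q = G.ftail p) := by
  cases hp : p.2 <;> cases hq : q.2 <;>
    simp [ftail, fhead, hp, hq, h]

theorem walk_last_mem {a b : V} {l : List (E × Bool)} (h : G.Walk l a b) :
    b ∈ a :: l.map G.fhead := by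
  induction l generalizing a with
  | nil => rw [walk_nil] at h; exact List.mem_cons.2 (Or.inl h.symm)
  | cons p l ih =>
    rcases List.mem_cons.1 (ih h.2) with h' | h'
    · exact List.mem_cons.2 (Or.inr (List.mem_cons.2 (Or.inl h')))
    · exact List.mem_cons.2 (Or.inr (List.mem_cons.2 (Or.inr h')))

/-! ### kappa toolkit -/

/-- The canonical map between component quotients for `S ⊆ S'`. -/
noncomputable def qmap {S S' : Set E} (h : S ⊆ S') :
    Quot (G.step S) → Quot (G.step S') :=
  Quot.lift (Quot.mk (G.step S')) (fun _ _ hab => Quot.sound (by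
    obtain ⟨e, he, hx⟩ := hab; exact ⟨e, h he, hx⟩))

@[simp] theorem qmap_mk {S S' : Set E} (h : S ⊆ S') (v : V) :
    G.qmap h (Quot.mk (G.step S) v) = Quot.mk (G.step S') v := rfl

theorem qmap_surjective {S S' : Set E} (h : S ⊆ S') : Function.Surjective (G.qmap h) := by
  intro x
  obtain ⟨v, rfl⟩ := Quot.exists_rep x
  exact ⟨Quot.mk _ v, rfl⟩

section KappaFin

variable [Fintype V]

theorem kappa_le_of_subset {S S' : Set E} (h : S ⊆ S') : G.kappa S' ≤ G.kappa S :=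
  Nat.card_le_card_of_surjective (G.qmap h) (G.qmap_surjective h)

theorem conn_insert_iff {S : Set E} {e : E} {a b : V} :
    G.conn (insert e S) a b ↔ G.conn S a b ∨
      (G.conn S a (G.src e) ∧ G.conn S (G.tgt e) b) ∨
      (G.conn S a (G.tgt e) ∧ G.conn S (G.src e) b) := by
  constructor
  · intro h
    rw [conn_iff_rtg] at h
    induction h with
    | refl => exact Or.inl rfl
    | @tail x y hxy hstep ih =>
      obtain ⟨f, hf, hx⟩ := hstep
      rcases Set.mem_insert_iff.1 hf with rfl | hfS
      · rcases hx with ⟨h1, h2⟩ | ⟨h1, h2⟩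
        · subst h1; subst h2
          rcases ih with h' | ⟨h1', h2'⟩ | ⟨h1', h2'⟩
          · exact Or.inr (Or.inl ⟨h', G.conn_refl _⟩)
          · exact Or.inr (Or.inl ⟨h1', G.conn_refl _⟩)
          · exact Or.inl h1'
        · subst h1; subst h2
          rcases ih with h' | ⟨h1', h2'⟩ | ⟨h1', h2'⟩
          · exact Or.inr (Or.inr ⟨h', G.conn_refl _⟩)
          · exact Or.inl h1'
          · exact Or.inr (Or.inr ⟨h1', G.conn_refl _⟩)
      · have hxy' : G.conn S x y := G.conn_of_step ⟨f, hfS, hx⟩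
        rcases ih with h' | ⟨h1', h2'⟩ | ⟨h1', h2'⟩
        · exact Or.inl (G.conn_trans h' hxy')
        · exact Or.inr (Or.inl ⟨h1', G.conn_trans h2' hxy'⟩)
        · exact Or.inr (Or.inr ⟨h1', G.conn_trans h2' hxy'⟩)
  · rintro (h | ⟨h1, h2⟩ | ⟨h1, h2⟩)
    · exact G.conn_mono (Set.subset_insert e S) h
    · exact G.conn_trans (G.conn_mono (Set.subset_insert e S) h1)
        (G.conn_trans (G.conn_edge (Set.mem_insert e S))
          (G.conn_mono (Set.subset_insert e S) h2))
    · exact G.conn_trans (G.conn_mono (Set.subset_insert e S) h1)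
        (G.conn_trans (G.conn_edge (Set.mem_insert e S)).symm
          (G.conn_mono (Set.subset_insert e S) h2))

theorem kappa_insert_eq_of_conn {S : Set E} {e : E}
    (h : G.conn S (G.src e) (G.tgt e)) : G.kappa (insert e S) = G.kappa S := by
  have hsound : ∀ a b, G.step (insert e S) a b →
      Quot.mk (G.step S) a = Quot.mk (G.step S) b := by
    rintro a b ⟨f, hf, ⟨h1, h2⟩ | ⟨h1, h2⟩⟩
    · rcases Set.mem_insert_iff.1 hf with rfl | hfS
      · exact h1 ▸ h2 ▸ h
      · exact h1 ▸ h2 ▸ G.conn_edge hfS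
    · rcases Set.mem_insert_iff.1 hf with rfl | hfS
      · exact h1 ▸ h2 ▸ h.symm
      · exact h1 ▸ h2 ▸ (G.conn_edge hfS).symm
  refine le_antisymm (G.kappa_le_of_subset (Set.subset_insert e S))
    (Nat.card_le_card_of_surjective (Quot.lift (Quot.mk (G.step S)) hsound) ?_)
  intro x
  obtain ⟨v, rfl⟩ := Quot.exists_rep x
  exact ⟨Quot.mk _ v, rfl⟩

theorem kappa_insert_lt_of_not_conn {S : Set E} {e : E}
    (h : ¬ G.conn S (G.src e) (G.tgt e)) : G.kappa (insert e S) < G.kappa S := by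
  refine aux_natCard_lt_of_surj_not_inj (G.qmap (Set.subset_insert e S))
    (G.qmap_surjective _) (fun hinj => h ?_)
  exact hinj (Quot.sound ⟨e, Set.mem_insert e S, Or.inl ⟨rfl, rfl⟩⟩)

theorem kappa_le_kappa_insert_add_one {S : Set E} {e : E} :
    G.kappa S ≤ G.kappa (insert e S) + 1 := by
  classical
  set π := G.qmap (Set.subset_insert e S)
  have key : ∀ x y : Quot (G.step S), π x = π y →
      x ≠ Quot.mk _ (G.tgt e) → y ≠ Quot.mk _ (G.tgt e) → x = y := by
    intro x y
    induction x using Quot.ind with | _ a =>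
    induction y using Quot.ind with | _ b =>
    intro hxy hx hy
    have : G.conn (insert e S) a b := hxy
    rcases G.conn_insert_iff.1 this with h' | ⟨h1, h2⟩ | ⟨h1, h2⟩
    · exact h'
    · exact absurd h2.symm hy
    · exact absurd h1 hx
  have hinj : Function.Injective (fun x : Quot (G.step S) =>
      if x = Quot.mk _ (G.tgt e) then (Sum.inr () : Quot (G.step (insert e S)) ⊕ Unit)
      else Sum.inl (π x)) := by
    intro x y hxy
    by_cases hx : x = Quot.mk _ (G.tgt e)
    · by_cases hy : y = Quot.mk _ (G.tgt e)
      · exact hx.trans hy.symm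
      · simp [hx, hy] at hxy
    · by_cases hy : y = Quot.mk _ (G.tgt e)
      · simp [hx, hy] at hxy
      · simp only [if_neg hx, if_neg hy, Sum.inl.injEq] at hxy
        exact key x y hxy hx hy
  have := Nat.card_le_card_of_injective _ hinj
  simpa [Nat.card_sum, kappa] using this

theorem kappa_insert_of_not_conn {S : Set E} {e : E}
    (h : ¬ G.conn S (G.src e) (G.tgt e)) : G.kappa (insert e S) = G.kappa S - 1 := by
  have h1 := G.kappa_insert_lt_of_not_conn h
  have h2 := G.kappa_le_kappa_insert_add_one (S := S) (e := e)
  omega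

theorem kappa_empty : G.kappa (∅ : Set E) = Fintype.card V := by
  have hsound : ∀ a b, G.step (∅ : Set E) a b → a = b := by
    rintro a b ⟨e, he, _⟩
    exact absurd he (Set.notMem_empty e)
  refine le_antisymm ?_ ?_
  · rw [← Nat.card_eq_fintype_card (α := V)]
    exact Nat.card_le_card_of_surjective (Quot.mk _) Quot.exists_rep
  · rw [← Nat.card_eq_fintype_card (α := V)]
    refine Nat.card_le_card_of_surjective (Quot.lift id hsound) ?_
    intro v
    exact ⟨Quot.mk _ v, rfl⟩

theorem kappa_eq_one_iff [Nonempty V] {S : Set E} :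
    G.kappa S = 1 ↔ ∀ a b : V, G.conn S a b := by
  rw [kappa, Nat.card_eq_one_iff_unique]
  constructor
  · rintro ⟨hsub, -⟩ a b
    exact hsub.elim (Quot.mk _ a) (Quot.mk _ b)
  · intro h
    refine ⟨⟨fun x y => ?_⟩, ⟨Quot.mk _ (Classical.arbitrary V)⟩⟩
    induction x using Quot.ind with | _ a =>
    induction y using Quot.ind with | _ b =>
    exact h a b

/-- `U` separates `S`: no edge of `S` crosses `U`. -/
def Sep (S : Set E) (U : Set V) : Prop := ∀ e ∈ S, (G.src e ∈ U ↔ G.tgt e ∈ U)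

theorem sep_conn_iff {S : Set E} {U : Set V} (h : G.Sep S U) {a b : V}
    (hc : G.conn S a b) : a ∈ U ↔ b ∈ U := by
  rw [conn_iff_rtg] at hc
  induction hc with
  | refl => exact Iff.rfl
  | tail _ hstep ih =>
    refine ih.trans ?_
    obtain ⟨e, he, ⟨h1, h2⟩ | ⟨h1, h2⟩⟩ := hstep
    · exact h1 ▸ h2 ▸ h e he
    · exact h2 ▸ h1 ▸ (h e he).symm

theorem two_le_kappa_of_sep {S : Set E} {U : Set V} (h : G.Sep S U) {u v : V}
    (hu : u ∈ U) (hv : v ∉ U) : 2 ≤ G.kappa S := by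
  have : Quot.mk (G.step S) u ≠ Quot.mk (G.step S) v := by
    intro hc
    exact hv ((G.sep_conn_iff h hc).1 hu)
  exact aux_two_le_natCard this

theorem walk_cross {U : Set V} {a b : V} {l : List (E × Bool)} (h : G.Walk l a b)
    (ha : a ∈ U) (hb : b ∉ U) : ∃ p ∈ l, ¬ (G.src p.1 ∈ U ↔ G.tgt p.1 ∈ U) := by
  induction l generalizing a with
  | nil => rw [walk_nil] at h; exact absurd (h ▸ ha) hb
  | cons p l ih =>
    by_cases hp : G.fhead p ∈ U
    · obtain ⟨q, hq, hq'⟩ := ih h.2 hp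
      exact ⟨q, List.mem_cons_of_mem _ hq, hq'⟩
    · refine ⟨p, List.mem_cons_self, ?_⟩
      have hta : G.ftail p ∈ U := h.1 ▸ ha
      cases hd : p.2 <;> simp [ftail, fhead, hd] at hta hp <;> tauto

theorem kappa_coe_add_card [Fintype E] (S : Finset E) :
    Fintype.card V ≤ G.kappa ↑S + S.card := by
  classical
  induction S using Finset.induction with
  | empty => simp [G.kappa_empty]
  | @insert e S he ih =>
    have h1 : G.kappa ↑S ≤ G.kappa (insert e ↑S) + 1 := G.kappa_le_kappa_insert_add_one
    rw [Finset.coe_insert]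
    rw [Finset.card_insert_of_notMem he]
    omega

theorem exists_not_conn_of_kappa_gt {S : Set E} [Nonempty V]
    (hconn : G.kappa Set.univ = 1) (h : 1 < G.kappa S) :
    ∃ e : E, ¬ G.conn S (G.src e) (G.tgt e) := by
  by_contra hc
  push_neg at hc
  have : ∀ a b : V, G.conn S a b := by
    intro a b
    have huniv : G.conn Set.univ a b := G.kappa_eq_one_iff.1 hconn a b
    obtain ⟨l, hl, -⟩ := G.exists_walk_of_conn huniv
    clear huniv
    induction l generalizing a with
    | nil => rw [walk_nil] at hl; rw [hl]
    | cons p l ih =>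
      refine G.conn_trans ?_ (ih _ hl.2)
      rw [← hl.1]
      cases hd : p.2
      · simpa [ftail, fhead, hd, conn] using (hc p.1).symm
      · simpa [ftail, fhead, hd] using hc p.1
  exact absurd (G.kappa_eq_one_iff.2 this) (by omega)

end KappaFin

/-! ### Path extraction -/

theorem walk_suffix_from_vertex {b v : V} :
    ∀ {l : List (E × Bool)} {a : V}, G.Walk l a b → v ∈ a :: l.map G.fhead →
      ∃ l', G.Walk l' v b ∧ (v :: l'.map G.fhead) <:+ (a :: l.map G.fhead) ∧ l' <:+ l := by
  intro l
  induction l with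
  | nil =>
    intro a h hv
    rw [walk_nil] at h
    simp only [List.map_nil, List.mem_singleton] at hv
    exact ⟨[], by rw [walk_nil, hv, h], by simp [hv], List.nil_suffix⟩
  | cons p t ih =>
    intro a h hv
    rcases List.mem_cons.1 hv with rfl | hv'
    · exact ⟨p :: t, h, List.suffix_refl _, List.suffix_refl _⟩
    · obtain ⟨l', hw, hsuf, hsufl⟩ := ih h.2 hv'
      exact ⟨l', hw, hsuf.trans (List.suffix_cons _ _), hsufl.trans (List.suffix_cons _ _)⟩

theorem exists_path_of_walk {b : V} :
    ∀ (l : List (E × Bool)) (a : V), G.Walk l a b →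
      ∃ l', G.Walk l' a b ∧ (a :: l'.map G.fhead).Nodup ∧ ∀ p ∈ l', p ∈ l := by
  intro l
  induction l with
  | nil =>
    intro a h
    exact ⟨[], h, by simp, by simp⟩
  | cons p t ih =>
    intro a h
    obtain ⟨l'', hw, hnd, hmem⟩ := ih (G.fhead p) h.2
    by_cases ha : a ∈ G.fhead p :: l''.map G.fhead
    · obtain ⟨l3, hw3, hsuf, hsufl⟩ := G.walk_suffix_from_vertex hw ha
      refine ⟨l3, hw3, hsuf.sublist.nodup hnd, ?_⟩
      intro q hq
      exact List.mem_cons_of_mem _ (hmem q (hsufl.subset hq))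
    · refine ⟨p :: l'', ⟨h.1, hw⟩, ?_, ?_⟩
      · exact List.nodup_cons.2 ⟨ha, hnd⟩
      · intro q hq
        rcases List.mem_cons.1 hq with rfl | hq'
        · exact List.mem_cons_self
        · exact List.mem_cons_of_mem _ (hmem q hq')

theorem path_edges_nodup {b : V} :
    ∀ {l : List (E × Bool)} {a : V}, G.Walk l a b → (a :: l.map G.fhead).Nodup →
      (l.map Prod.fst).Nodup := by
  intro l
  induction l with
  | nil => intro a _ _; simp
  | cons p t ih =>
    intro a h hnd
    have hnd' : (G.fhead p :: t.map G.fhead).Nodup := (List.nodup_cons.1 hnd).2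
    refine List.nodup_cons.2 ⟨?_, ih h.2 hnd'⟩
    intro hmem
    obtain ⟨q, hq, hq1⟩ := List.mem_map.1 hmem
    have hends := G.mem_walk_endpoints h.2 hq
    have ha : a ∉ G.fhead p :: t.map G.fhead := (List.nodup_cons.1 hnd).1
    rcases G.step_pair_eq (p := p) (q := q) hq1 with ⟨h1, _⟩ | ⟨_, h2⟩
    · rw [h.1] at h1
      exact ha (h1 ▸ hends.1)
    · rw [h.1] at h2
      exact ha (List.mem_cons_of_mem _ (h2 ▸ hends.2))

theorem conn_exists_path {S : Set E} {a b : V} (h : G.conn S a b) :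
    ∃ l : List (E × Bool), G.Walk l a b ∧ (a :: l.map G.fhead).Nodup ∧
      (l.map Prod.fst).Nodup ∧ ∀ p ∈ l, p.1 ∈ S := by
  obtain ⟨l, hl, hlS⟩ := G.exists_walk_of_conn h
  obtain ⟨l', hw, hnd, hmem⟩ := G.exists_path_of_walk l a hl
  exact ⟨l', hw, hnd, G.path_edges_nodup hw hnd, fun p hp => hlS p (hmem p hp)⟩

/-! ### Cuts -/

theorem crossing_iff {U : Set V} {e : E} :
    G.crossing U e ↔ ¬ (G.src e ∈ U ↔ G.tgt e ∈ U) := by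
  unfold crossing; tauto

section CutsFin

variable [Fintype V]

theorem nonempty_V_of_conn (hconn : G.kappa Set.univ = 1) : Nonempty V := by
  obtain ⟨-, ⟨x⟩⟩ := Nat.card_eq_one_iff_unique.1 hconn
  obtain ⟨v, -⟩ := Quot.exists_rep x
  exact ⟨v⟩

/-- Crossing sets of nice vertex sets are cuts. -/
theorem isCut_crossing (hconn : G.kappa Set.univ = 1) {A : Set E} {U : Set V}
    (hSep : G.Sep A U)
    (hU : ∀ u ∈ U, ∀ u' ∈ U, G.conn A u u')
    (hUc : ∀ v, v ∉ U → ∀ v', v' ∉ U → G.conn A v v')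
    {u v : V} (hu : u ∈ U) (hv : v ∉ U) :
    G.IsCut {e | G.crossing U e} := by
  have : Nonempty V := ⟨u⟩
  set D : Set E := {e | G.crossing U e} with hD
  have hsepD : G.Sep Dᶜ U := by
    intro e he
    by_contra hc
    exact he (G.crossing_iff.2 hc)
  have hAD : A ⊆ Dᶜ := by
    intro e heA heD
    exact (G.crossing_iff.1 heD) (hSep e heA)
  refine ⟨?_, ?_, ?_⟩
  · -- nonempty
    obtain ⟨l, hw, -⟩ := G.exists_walk_of_conn (G.kappa_eq_one_iff.1 hconn u v)
    obtain ⟨p, -, hp⟩ := G.walk_cross hw hu hv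
    exact ⟨p.1, G.crossing_iff.2 hp⟩
  · -- disconnects
    have h2 := G.two_le_kappa_of_sep hsepD hu hv
    omega
  · -- minimality
    intro C' hC' hne
    obtain ⟨c, hcD, hcC⟩ := Set.exists_of_ssubset hC'
    have hcross : G.crossing U c := hcD
    rw [hconn]
    simp only [gt_iff_lt, not_lt]
    have hsub : A ⊆ C'ᶜ := fun e he hec => hAD he (hC'.1 hec)
    have hc' : c ∈ C'ᶜ := hcC
    have key : ∀ a b : V, G.conn C'ᶜ a b := by
      have hedge : G.conn C'ᶜ (G.src c) (G.tgt c) := G.conn_edge hc'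
      rcases Classical.em (G.src c ∈ U) with hsrc | hsrc
      · have htgt : G.tgt c ∉ U := fun h => (G.crossing_iff.1 hcross) ⟨fun _ => h, fun _ => hsrc⟩
        have reach : ∀ w : V, G.conn C'ᶜ w (G.src c) := by
          intro w
          by_cases hw : w ∈ U
          · exact G.conn_mono hsub (hU w hw _ hsrc)
          · exact G.conn_trans (G.conn_mono hsub (hUc w hw _ htgt)) hedge.symm
        exact fun a b => G.conn_trans (reach a) (reach b).symm
      · have htgt : G.tgt c ∈ U := by
          by_contra htgt
          exact (G.crossing_iff.1 hcross) ⟨fun h => absurd h hsrc, fun h => absurd h htgt⟩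
        have reach : ∀ w : V, G.conn C'ᶜ w (G.tgt c) := by
          intro w
          by_cases hw : w ∈ U
          · exact G.conn_mono hsub (hU w hw _ htgt)
          · exact G.conn_trans (G.conn_mono hsub (hUc w hw _ hsrc)) hedge
        exact fun a b => G.conn_trans (reach a) (reach b).symm
    have := G.kappa_eq_one_iff.2 key
    omega

theorem aux_eq_of_card_two {α : Type*} [Finite α] (h : Nat.card α = 2) (x y z : α) :
    x = y ∨ x = z ∨ y = z := by
  have : Fintype α := Fintype.ofFinite α
  rw [Nat.card_eq_fintype_card] at h
  by_contra hc
  push_neg at hc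
  obtain ⟨h1, h2, h3⟩ := hc
  have : ({x, y, z} : Finset α).card = 3 := by
    rw [Finset.card_insert_of_notMem (by simp [h1, h2]),
      Finset.card_insert_of_notMem (by simp [h3]), Finset.card_singleton]
  have hle := Finset.card_le_univ ({x, y, z} : Finset α)
  omega

/-- Structure of cuts: every cut is the crossing set of a two-class separation. -/
theorem cut_structure (hconn : G.kappa Set.univ = 1) {D : Set E} (hD : G.IsCut D) :
    ∃ U : Set V, (∀ e, e ∈ D ↔ G.crossing U e) ∧ G.Sep Dᶜ U := by
  have hV : Nonempty V := G.nonempty_V_of_conn hconn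
  obtain ⟨d₀, hd₀⟩ := hD.1
  have hins : ∀ d ∈ D, G.kappa (insert d Dᶜ) = 1 := by
    intro d hd
    by_cases hsing : D = {d}
    · have : insert d Dᶜ = Set.univ := by
        rw [hsing]; ext x; by_cases hx : x = d <;> simp [hx]
      rw [this, hconn]
    · have hproper : D \ {d} ⊂ D := by
        constructor
        · exact Set.diff_subset
        · intro hsub
          exact (hsub hd).2 rfl
      have hne : (D \ {d}).Nonempty := by
        rw [Set.diff_nonempty]
        intro hsub
        exact hsing (Set.Subset.antisymm hsub (Set.singleton_subset_iff.2 hd))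
      have := hD.2.2 _ hproper hne
      rw [hconn] at this
      simp only [gt_iff_lt, not_lt] at this
      have heq : (D \ {d})ᶜ = insert d Dᶜ := by
        ext x
        simp only [Set.mem_diff, Set.mem_singleton_iff, Set.mem_compl_iff, Set.mem_insert_iff,
          not_and, not_not]
        by_cases hx : x = d <;> simp [hx]
      have hge : 1 ≤ G.kappa (insert d Dᶜ) := by
        have : Nonempty (Quot (G.step (insert d Dᶜ))) := ⟨Quot.mk _ (Classical.arbitrary V)⟩
        exact Nat.card_pos
      rw [heq] at this
      omega
  have hk2 : G.kappa Dᶜ = 2 := by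
    have h1 := G.kappa_le_kappa_insert_add_one (S := Dᶜ) (e := d₀)
    rw [hins d₀ hd₀] at h1
    have h2 := hD.2.1
    rw [hconn] at h2
    omega
  have hnc : ∀ d ∈ D, ¬ G.conn Dᶜ (G.src d) (G.tgt d) := by
    intro d hd hc
    have := G.kappa_insert_eq_of_conn hc
    rw [hins d hd, hk2] at this
    omega
  refine ⟨{w | G.conn Dᶜ w (G.src d₀)}, ?_, ?_⟩
  · intro e
    constructor
    · intro he
      rw [crossing_iff]
      intro hiff
      -- both endpoints conn to src d₀ or both not
      rcases Classical.em (G.conn Dᶜ (G.src e) (G.src d₀)) with hs | hs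
      · exact hnc e he (G.conn_trans hs (hiff.1 hs).symm)
      · -- neither endpoint in U: 3 classes among src e, tgt e... they are nonconn pairwise
        have ht : ¬ G.conn Dᶜ (G.tgt e) (G.src d₀) := fun h => hs (hiff.2 h)
        have := aux_eq_of_card_two (α := Quot (G.step Dᶜ)) hk2
          (Quot.mk _ (G.src e)) (Quot.mk _ (G.tgt e)) (Quot.mk _ (G.src d₀))
        rcases this with h | h | h
        · exact hnc e he h
        · exact hs h
        · exact ht h
    · intro he
      by_contra heD
      have : G.conn Dᶜ (G.src e) (G.tgt e) := G.conn_edge heD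
      rw [crossing_iff] at he
      exact he ⟨fun h => G.conn_trans this.symm h, fun h => G.conn_trans this h⟩
  · intro e he
    exact ⟨fun h => G.conn_trans (G.conn_edge he).symm h,
      fun h => G.conn_trans (G.conn_edge he) h⟩

theorem cut_meets_connected {D T : Set E} (hD : G.IsCut D) (hconn : G.kappa Set.univ = 1)
    (hT : G.kappa T = 1) : (D ∩ T).Nonempty := by
  rw [Set.nonempty_iff_ne_empty]
  intro hc
  have hsub : T ⊆ Dᶜ := by
    intro e he hed
    exact absurd (Set.mem_inter hed he) (by rw [hc]; exact Set.notMem_empty e)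
  have := G.kappa_le_of_subset hsub
  have h2 := hD.2.1
  rw [hconn] at h2
  omega

end CutsFin

/-! ### Simple cycles -/

section CyclesFin

variable [Fintype V] [Fintype E]

/-- Edge set of a list of steps. -/
def edgeSet (P : List (E × Bool)) : Set E := {e | e ∈ P.map Prod.fst}

theorem edgeSet_ncard {P : List (E × Bool)} (h : (P.map Prod.fst).Nodup) :
    (RefGraph.edgeSet P).ncard = P.length := by
  have : RefGraph.edgeSet P = ↑(P.map Prod.fst).toFinset := by
    ext e; simp [edgeSet]
  rw [this, Set.ncard_coe_finset, List.toFinset_card_of_nodup h, List.length_map]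

/-- Witness that `insert f (edgeSet P)` is a simple closed cycle. -/
def SCW (f : E) (P : List (E × Bool)) : Prop :=
  G.Walk P (G.tgt f) (G.src f) ∧ (G.tgt f :: P.map G.fhead).Nodup ∧
    (P.map Prod.fst).Nodup ∧ f ∉ P.map Prod.fst

theorem isolated_not_conn {S : Set E} {a z : V}
    (hiso : ∀ e ∈ S, G.src e ≠ a ∧ G.tgt e ≠ a) (h : G.conn S a z) : a = z := by
  rw [conn_iff_rtg] at h
  rcases (Relation.ReflTransGen.cases_head h) with rfl | ⟨w, hw, -⟩
  · rfl
  · obtain ⟨e, he, ⟨h1, -⟩ | ⟨-, h2⟩⟩ := hw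
    · exact absurd h1 (hiso e he).1
    · exact absurd h2 (hiso e he).2

theorem walk_path_kappa :
    ∀ {l : List (E × Bool)} {a b : V}, G.Walk l a b → (a :: l.map G.fhead).Nodup →
      (l.map Prod.fst).Nodup → G.kappa (RefGraph.edgeSet l) = Fintype.card V - l.length := by
  intro l
  induction l with
  | nil =>
    intro a b _ _ _
    have : RefGraph.edgeSet [] = (∅ : Set E) := by ext e; simp [edgeSet]
    simp [this, G.kappa_empty]
  | cons p t ih =>
    intro a b h hnd hnde
    have hne : Nonempty V := ⟨a⟩
    have hnd' : (G.fhead p :: t.map G.fhead).Nodup := (List.nodup_cons.1 hnd).2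
    have ha : a ∉ G.fhead p :: t.map G.fhead := (List.nodup_cons.1 hnd).1
    have ihk := ih h.2 hnd' (List.nodup_cons.1 hnde).2
    have hiso : ∀ e ∈ RefGraph.edgeSet t, G.src e ≠ a ∧ G.tgt e ≠ a := by
      intro e he
      obtain ⟨q, hq, hq1⟩ := List.mem_map.1 he
      have hends := G.mem_walk_endpoints h.2 hq
      have h1 : G.ftail q ≠ a := fun hc => ha (hc ▸ hends.1)
      have h2 : G.fhead q ≠ a := fun hc => ha (List.mem_cons_of_mem _ (hc ▸ hends.2))
      cases hdq : q.2
      · exact ⟨fun hc => h2 (by simp [fhead, hdq, hq1, hc]),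
          fun hc => h1 (by simp [ftail, hdq, hq1, hc])⟩
      · exact ⟨fun hc => h1 (by simp [ftail, hdq, hq1, hc]),
          fun hc => h2 (by simp [fhead, hdq, hq1, hc])⟩
    have hnotconn : ¬ G.conn (RefGraph.edgeSet t) (G.src p.1) (G.tgt p.1) := by
      intro hc
      cases hdp : p.2
      · have h1 : G.tgt p.1 = a := by rw [← h.1]; simp [ftail, hdp]
        have h2 : G.fhead p = G.src p.1 := by simp [fhead, hdp]
        have h3 : a = G.src p.1 := G.isolated_not_conn hiso (h1 ▸ hc.symm)
        exact ha (by rw [h2, ← h3]; exact List.mem_cons_self)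
      · have h1 : G.src p.1 = a := by rw [← h.1]; simp [ftail, hdp]
        have h2 : G.fhead p = G.tgt p.1 := by simp [fhead, hdp]
        have h3 : a = G.tgt p.1 := G.isolated_not_conn hiso (h1 ▸ hc)
        exact ha (by rw [h2, ← h3]; exact List.mem_cons_self)
    have hset : RefGraph.edgeSet (p :: t) = insert p.1 (RefGraph.edgeSet t) := by
      ext e; simp [edgeSet]
    have : Nonempty (Quot (G.step (RefGraph.edgeSet t))) := ⟨Quot.mk _ a⟩
    have hk1 : 1 ≤ G.kappa (RefGraph.edgeSet t) := Nat.card_pos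
    rw [hset, G.kappa_insert_of_not_conn hnotconn, ihk]
    simp only [List.length_cons]
    omega

theorem scw_conn_erase {f : E} {P : List (E × Bool)} (h : G.SCW f P) {x : E}
    (hx : x ∈ insert f (RefGraph.edgeSet P)) :
    G.conn (insert f (RefGraph.edgeSet P) \ {x}) (G.src x) (G.tgt x) := by
  obtain ⟨hw, hndv, hnde, hfP⟩ := h
  rcases Set.mem_insert_iff.1 hx with rfl | hxP
  · refine (G.conn_of_walk hw ?_).symm
    intro p hp
    refine ⟨Set.mem_insert_of_mem _ (List.mem_map_of_mem (f := Prod.fst) hp), ?_⟩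
    intro hc
    rw [Set.mem_singleton_iff] at hc
    exact hfP (hc ▸ List.mem_map_of_mem (f := Prod.fst) hp)
  · obtain ⟨q, hqP, hq1⟩ := List.mem_map.1 hxP
    obtain ⟨P1, P2, rfl⟩ := List.append_of_mem hqP
    have hsplit : (P1 ++ q :: P2).map Prod.fst = P1.map Prod.fst ++ q.1 :: P2.map Prod.fst := by
      simp
    rw [hsplit] at hnde
    have hq1' : q.1 ∉ P1.map Prod.fst ∧ q.1 ∉ P2.map Prod.fst := by
      have h1 := List.Nodup.of_append_right hnde
      have h2 : List.Disjoint (P1.map Prod.fst) (q.1 :: P2.map Prod.fst) :=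
        List.disjoint_of_nodup_append hnde
      exact ⟨fun hc => h2 hc (List.mem_cons_self), (List.nodup_cons.1 h1).1⟩
    have hfP1 : f ∉ P1.map Prod.fst ∧ f ∉ P2.map Prod.fst := by
      rw [hsplit] at hfP
      constructor
      · exact fun hc => hfP (List.mem_append.2 (Or.inl hc))
      · exact fun hc => hfP (List.mem_append.2 (Or.inr (List.mem_cons_of_mem _ hc)))
    obtain ⟨m, hw1, hw2⟩ := G.walk_split hw
    have hm : m = G.ftail q := hw2.1.symm
    set S : Set E := insert f (RefGraph.edgeSet (P1 ++ q :: P2)) \ {x} with hS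
    have hmemP1 : ∀ p ∈ P1, p.1 ∈ S := by
      intro p hp
      refine ⟨Set.mem_insert_of_mem _ (List.mem_map_of_mem (f := Prod.fst) (by simp [hp])), ?_⟩
      rw [Set.mem_singleton_iff, ← hq1]
      intro hc
      exact hq1'.1 (hc ▸ List.mem_map_of_mem (f := Prod.fst) hp)
    have hmemP2 : ∀ p ∈ P2, p.1 ∈ S := by
      intro p hp
      refine ⟨Set.mem_insert_of_mem _ (List.mem_map_of_mem (f := Prod.fst) (by simp [hp])), ?_⟩
      rw [Set.mem_singleton_iff, ← hq1]
      intro hc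
      exact hq1'.2 (hc ▸ List.mem_map_of_mem (f := Prod.fst) hp)
    have hfS : f ∈ S := by
      refine ⟨Set.mem_insert _ _, ?_⟩
      rw [Set.mem_singleton_iff, ← hq1]
      intro hc
      exact hfP (hc ▸ List.mem_map_of_mem (f := Prod.fst) hqP)
    -- conn from fhead q to ftail q within S
    have hc1 : G.conn S (G.fhead q) (G.src f) := G.conn_of_walk hw2.2 hmemP2
    have hc2 : G.conn S (G.src f) (G.tgt f) := G.conn_edge hfS
    have hc3 : G.conn S (G.tgt f) (G.ftail q) := by
      have := G.conn_of_walk hw1 hmemP1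
      exact hm ▸ this
    have hcq : G.conn S (G.fhead q) (G.ftail q) :=
      G.conn_trans hc1 (G.conn_trans hc2 hc3)
    cases hdq : q.2
    · -- ftail q = tgt, fhead q = src
      have e1 : G.ftail q = G.tgt x := by simp [ftail, hdq, hq1]
      have e2 : G.fhead q = G.src x := by simp [fhead, hdq, hq1]
      exact e1 ▸ e2 ▸ hcq
    · have e1 : G.ftail q = G.src x := by simp [ftail, hdq, hq1]
      have e2 : G.fhead q = G.tgt x := by simp [fhead, hdq, hq1]
      exact e1 ▸ e2 ▸ (hcq).symm

theorem scw_kappa {f : E} {P : List (E × Bool)} (h : G.SCW f P) :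
    G.kappa (insert f (RefGraph.edgeSet P)) = Fintype.card V - P.length := by
  obtain ⟨hw, hndv, hnde, hfP⟩ := h
  have hconnfp : G.conn (RefGraph.edgeSet P) (G.src f) (G.tgt f) := by
    refine (G.conn_of_walk hw ?_).symm
    intro p hp
    exact List.mem_map_of_mem (f := Prod.fst) hp
  rw [G.kappa_insert_eq_of_conn hconnfp]
  exact G.walk_path_kappa hw hndv hnde

end CyclesFin

/-! ### Forests, trees, extension -/

section TreesFin

variable [Fintype V] [Fintype E]

theorem kappa_union_finset_le (S : Set E) (F : Finset E) :
    G.kappa S ≤ G.kappa (S ∪ ↑F) + F.card := by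
  classical
  induction F using Finset.induction with
  | empty => simp
  | @insert e F he ih =>
    have h1 : G.kappa (S ∪ ↑F) ≤ G.kappa (insert e (S ∪ ↑F)) + 1 :=
      G.kappa_le_kappa_insert_add_one
    have h2 : insert e (S ∪ ↑F) = S ∪ ↑(insert e F) := by
      rw [Finset.coe_insert, Set.union_insert]
    rw [Finset.card_insert_of_notMem he, ← h2]
    omega

theorem kappa_ge_set (S : Set E) : Fintype.card V ≤ G.kappa S + S.ncard := by
  have h := G.kappa_coe_add_card S.toFinset
  rwa [Set.coe_toFinset, ← Set.ncard_eq_toFinset_card'] at h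

theorem tight_subset {S S' : Set E} (h : G.kappa S + S.ncard = Fintype.card V)
    (hsub : S' ⊆ S) : G.kappa S' + S'.ncard = Fintype.card V := by
  have hkey : G.kappa S' ≤ G.kappa S + (S \ S').ncard := by
    have h0 := G.kappa_union_finset_le S' (S \ S').toFinset
    rw [Set.coe_toFinset] at h0
    rw [Set.union_diff_cancel hsub] at h0
    rwa [← Set.ncard_eq_toFinset_card'] at h0
  have h2 : (S \ S').ncard = S.ncard - S'.ncard := Set.ncard_diff hsub
  have h2' : S'.ncard ≤ S.ncard := Set.ncard_le_ncard hsub (Set.toFinite _)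
  have h3 := G.kappa_ge_set S'
  omega

theorem bridge_of_tight {S : Set E} (h : G.kappa S + S.ncard = Fintype.card V)
    {e : E} (he : e ∈ S) : ¬ G.conn (S \ {e}) (G.src e) (G.tgt e) := by
  intro hc
  have h1 : insert e (S \ {e}) = S := by
    rw [Set.insert_diff_singleton]
    exact Set.insert_eq_self.2 he
  have h2 : G.kappa S = G.kappa (S \ {e}) := by
    conv_lhs => rw [← h1]
    exact G.kappa_insert_eq_of_conn hc
  have h3 : G.kappa (S \ {e}) + (S \ {e}).ncard = Fintype.card V :=
    G.tight_subset h Set.diff_subset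
  have h4 : (S \ {e}).ncard = S.ncard - 1 := Set.ncard_diff_singleton_of_mem he
  have h5 : 1 ≤ S.ncard := (Set.ncard_pos (Set.toFinite _)).2 ⟨e, he⟩
  omega

theorem forest_tight (F : Finset E)
    (h : ∀ e ∈ F, ¬ G.conn (↑F \ {e}) (G.src e) (G.tgt e)) :
    G.kappa ↑F + F.card = Fintype.card V := by
  classical
  induction F using Finset.induction with
  | empty => simp [G.kappa_empty]
  | @insert e F he ih =>
    have hV : Nonempty V := ⟨G.src e⟩
    have hbr : ¬ G.conn ↑F (G.src e) (G.tgt e) := by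
      have h0 := h e (Finset.mem_insert_self e F)
      have heq : (↑(insert e F) : Set E) \ {e} = ↑F := by
        ext x
        simp only [Finset.coe_insert, Set.mem_diff, Set.mem_insert_iff,
          Set.mem_singleton_iff, Finset.mem_coe]
        constructor
        · rintro ⟨h1 | h1, h2⟩
          · exact absurd h1 h2
          · exact h1
        · intro hx
          exact ⟨Or.inr hx, fun hc => he (hc ▸ hx)⟩
      rwa [heq] at h0
    have ihh : G.kappa ↑F + F.card = Fintype.card V := by
      refine ih (fun f hf => ?_)
      have h0 := h f (Finset.mem_insert_of_mem hf)
      intro hc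
      refine h0 (G.conn_mono ?_ hc)
      intro x hx
      exact ⟨Finset.mem_coe.2 (Finset.mem_insert_of_mem (Finset.mem_coe.1 hx.1)), hx.2⟩
    have hk : G.kappa (insert e (↑F : Set E)) = G.kappa ↑F - 1 :=
      G.kappa_insert_of_not_conn hbr
    have : Nonempty (Quot (G.step (↑F : Set E))) := ⟨Quot.mk _ (G.src e)⟩
    have hpos : 1 ≤ G.kappa (↑F : Set E) := Nat.card_pos
    rw [Finset.coe_insert, Finset.card_insert_of_notMem he, hk]
    omega

theorem forest_tight_set {S : Set E}
    (h : ∀ e ∈ S, ¬ G.conn (S \ {e}) (G.src e) (G.tgt e)) :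
    G.kappa S + S.ncard = Fintype.card V := by
  have hS : ↑S.toFinset = S := Set.coe_toFinset S
  have := G.forest_tight S.toFinset (by rw [hS]; intro e he; exact h e (by rwa [← Set.mem_toFinset]))
  rwa [hS, ← Set.ncard_eq_toFinset_card'] at this

theorem conn_erase_cases {S : Set E} {e : E} (he : e ∈ S) {a b : V} (h : G.conn S a b) :
    G.conn (S \ {e}) a b ∨
      (G.conn (S \ {e}) a (G.src e) ∧ G.conn (S \ {e}) (G.tgt e) b) ∨
      (G.conn (S \ {e}) a (G.tgt e) ∧ G.conn (S \ {e}) (G.src e) b) := by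
  have hins : insert e (S \ {e}) = S := by
    rw [Set.insert_diff_singleton]
    exact Set.insert_eq_self.2 he
  rw [← hins] at h
  exact G.conn_insert_iff.1 h

theorem kappa_one_reconnect {A X : Set E} {U : Set V}
    (hU : ∀ u ∈ U, ∀ u' ∈ U, G.conn A u u')
    (hUc : ∀ v, v ∉ U → ∀ v', v' ∉ U → G.conn A v v')
    (hAX : A ⊆ X) {c : E} (hc : c ∈ X) (hcr : G.crossing U c) (hV : Nonempty V) :
    G.kappa X = 1 := by
  rw [G.kappa_eq_one_iff]
  have hedge : G.conn X (G.src c) (G.tgt c) := G.conn_edge hc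
  rcases Classical.em (G.src c ∈ U) with hsrc | hsrc
  · have htgt : G.tgt c ∉ U := fun h => (G.crossing_iff.1 hcr) ⟨fun _ => h, fun _ => hsrc⟩
    have reach : ∀ w : V, G.conn X w (G.src c) := by
      intro w
      by_cases hw : w ∈ U
      · exact G.conn_mono hAX (hU w hw _ hsrc)
      · exact G.conn_trans (G.conn_mono hAX (hUc w hw _ htgt)) hedge.symm
    exact fun a b => G.conn_trans (reach a) (reach b).symm
  · have htgt : G.tgt c ∈ U := by
      by_contra htgt
      exact (G.crossing_iff.1 hcr) ⟨fun h => absurd h hsrc, fun h => absurd h htgt⟩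
    have reach : ∀ w : V, G.conn X w (G.tgt c) := by
      intro w
      by_cases hw : w ∈ U
      · exact G.conn_mono hAX (hU w hw _ htgt)
      · exact G.conn_trans (G.conn_mono hAX (hUc w hw _ hsrc)) hedge
    exact fun a b => G.conn_trans (reach a) (reach b).symm

theorem fund_cut (hconn : G.kappa Set.univ = 1) {T : Set E} (hT : G.kappa T = 1)
    {e : E} (he : e ∈ T) (hbr : ¬ G.conn (T \ {e}) (G.src e) (G.tgt e)) :
    ∃ D : Set E, G.IsCut D ∧ e ∈ D ∧ D ∩ T = {e} ∧
      (∀ d ∈ D, G.kappa ((T \ {e}) ∪ {d}) = 1) ∧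
      ∀ x : E, ¬ G.conn (T \ {e}) (G.src x) (G.tgt x) → x ∈ D := by
  have hV : Nonempty V := ⟨G.src e⟩
  set U : Set V := {w | G.conn (T \ {e}) w (G.src e)} with hUdef
  have hu : G.src e ∈ U := G.conn_refl _
  have hv : G.tgt e ∉ U := fun h => hbr (G.conn_symm h)
  have hSep : G.Sep (T \ {e}) U := by
    intro f hf
    exact ⟨fun h => G.conn_trans (G.conn_edge hf).symm h,
      fun h => G.conn_trans (G.conn_edge hf) h⟩
  have hU : ∀ u ∈ U, ∀ u' ∈ U, G.conn (T \ {e}) u u' :=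
    fun u hu' u' hu'' => G.conn_trans hu' (G.conn_symm hu'')
  have hUc : ∀ v, v ∉ U → ∀ v', v' ∉ U → G.conn (T \ {e}) v v' := by
    have key : ∀ v, v ∉ U → G.conn (T \ {e}) v (G.tgt e) := by
      intro v hvU
      have hTv : G.conn T v (G.src e) := G.kappa_eq_one_iff.1 hT v _
      rcases G.conn_erase_cases he hTv with h' | ⟨h1, h2⟩ | ⟨h1, h2⟩
      · exact absurd h' hvU
      · exact absurd h1 hvU
      · exact h1
    exact fun v hv1 v' hv2 => G.conn_trans (key v hv1) (G.conn_symm (key v' hv2))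
  have hcut : G.IsCut {f | G.crossing U f} := G.isCut_crossing hconn hSep hU hUc hu hv
  have heD : G.crossing U e := ⟨fun _ => hv, fun _ => hu⟩
  refine ⟨{f | G.crossing U f}, hcut, heD, ?_, ?_, ?_⟩
  · apply Set.Subset.antisymm
    · rintro x ⟨hxD, hxT⟩
      rw [Set.mem_singleton_iff]
      by_contra hne
      exact (G.crossing_iff.1 hxD) (hSep x ⟨hxT, hne⟩)
    · intro x hx
      rw [Set.mem_singleton_iff] at hx
      exact hx ▸ ⟨heD, he⟩
  · intro d hd
    exact G.kappa_one_reconnect hU hUc Set.subset_union_left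
      (Set.mem_union_right _ rfl) hd hV
  · intro x hx
    by_contra hxD
    have hiff : G.src x ∈ U ↔ G.tgt x ∈ U := by
      by_contra hc
      exact hxD (G.crossing_iff.2 hc)
    by_cases hsx : G.src x ∈ U
    · exact hx (hU _ hsx _ (hiff.1 hsx))
    · exact hx (hUc _ hsx _ (fun h => hsx (hiff.2 h)))

theorem extend_bridge (hconn : G.kappa Set.univ = 1) {X : Set E} {y : E} (hy : y ∈ X)
    (hbr : ¬ G.conn (X \ {y}) (G.src y) (G.tgt y)) :
    ∃ T', X ⊆ T' ∧ G.kappa T' = 1 ∧ ¬ G.conn (T' \ {y}) (G.src y) (G.tgt y) := by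
  have hV : Nonempty V := ⟨G.src y⟩
  suffices h : ∀ n (X : Set E), G.kappa X ≤ n → y ∈ X →
      ¬ G.conn (X \ {y}) (G.src y) (G.tgt y) →
      ∃ T', X ⊆ T' ∧ G.kappa T' = 1 ∧ ¬ G.conn (T' \ {y}) (G.src y) (G.tgt y) from
    h (G.kappa X) X le_rfl hy hbr
  intro n
  induction n with
  | zero =>
    intro X hk _ _
    have : Nonempty (Quot (G.step X)) := ⟨Quot.mk _ (G.src y)⟩
    have : 1 ≤ G.kappa X := Nat.card_pos
    omega
  | succ n ih =>
    intro X hk hyX hbrX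
    by_cases h1 : G.kappa X = 1
    · exact ⟨X, subset_rfl, h1, hbrX⟩
    · have : Nonempty (Quot (G.step X)) := ⟨Quot.mk _ (G.src y)⟩
      have hpos : 1 ≤ G.kappa X := Nat.card_pos
      have h2 : 1 < G.kappa X := by omega
      obtain ⟨f, hf⟩ := G.exists_not_conn_of_kappa_gt hconn h2
      have hfy : f ≠ y := fun hc => hf (hc ▸ G.conn_edge hyX)
      have hkins : G.kappa (insert f X) ≤ n := by
        have := G.kappa_insert_lt_of_not_conn hf
        omega
      have heq : (insert f X) \ {y} = insert f (X \ {y}) := by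
        ext x
        simp only [Set.mem_diff, Set.mem_insert_iff, Set.mem_singleton_iff]
        constructor
        · rintro ⟨h' | h', h2'⟩
          · exact Or.inl h'
          · exact Or.inr ⟨h', h2'⟩
        · rintro (h' | ⟨h', h2'⟩)
          · exact ⟨Or.inl h', h' ▸ hfy⟩
          · exact ⟨Or.inr h', h2'⟩
      have hXsub : X \ {y} ⊆ X := Set.diff_subset
      have hbr' : ¬ G.conn ((insert f X) \ {y}) (G.src y) (G.tgt y) := by
        intro hc
        rw [heq] at hc
        rcases G.conn_insert_iff.1 hc with h' | ⟨ha, hb⟩ | ⟨ha, hb⟩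
        · exact hbrX h'
        · exact hf (G.conn_trans (G.conn_mono hXsub ha.symm)
            (G.conn_trans (G.conn_edge hyX) (G.conn_mono hXsub hb.symm)))
        · exact hf (G.conn_trans (G.conn_mono hXsub hb)
            (G.conn_trans (G.conn_edge hyX).symm (G.conn_mono hXsub ha)))
      obtain ⟨T', hsub, hk1, hbrT⟩ := ih (insert f X) hkins (Set.mem_insert_of_mem _ hyX) hbr'
      exact ⟨T', (Set.subset_insert f X).trans hsub, hk1, hbrT⟩

/-- A simple closed cycle is a cycle. -/
theorem isCycle_scw (hconn : G.kappa Set.univ = 1) {f : E} {P : List (E × Bool)}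
    (h : G.SCW f P) : G.IsCycle (insert f (RefGraph.edgeSet P)) := by
  set C := insert f (RefGraph.edgeSet P) with hCdef
  refine ⟨⟨f, Set.mem_insert _ _⟩, ?_, ?_⟩
  · intro D hD hone
    obtain ⟨b, hb⟩ := Set.ncard_eq_one.1 hone
    have hbD : b ∈ D ∩ C := by rw [hb]; exact rfl
    obtain ⟨U, hDU, hsep⟩ := G.cut_structure hconn hD
    have hsubc : C \ {b} ⊆ Dᶜ := by
      intro x hx hxD
      have hmem : x ∈ D ∩ C := ⟨hxD, hx.1⟩
      rw [hb] at hmem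
      exact hx.2 hmem
    have hcb := G.scw_conn_erase h hbD.2
    have hconnD : G.conn Dᶜ (G.src b) (G.tgt b) := G.conn_mono hsubc hcb
    have hiff := G.sep_conn_iff hsep hconnD
    exact (G.crossing_iff.1 ((hDU b).1 hbD.1)) hiff
  · intro C' hC' hne hall
    obtain ⟨x, hxC, hxC'⟩ := Set.exists_of_ssubset hC'
    obtain ⟨y, hy⟩ := hne
    have hkCx : G.kappa (C \ {x}) + (C \ {x}).ncard = Fintype.card V := by
      have h1 : G.kappa (C \ {x}) = G.kappa C := by
        have hcx := G.scw_conn_erase h hxC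
        have hins : insert x (C \ {x}) = C := by
          rw [Set.insert_diff_singleton]
          exact Set.insert_eq_self.2 hxC
        conv_rhs => rw [← hins]
        exact (G.kappa_insert_eq_of_conn hcx).symm
      have hfP : f ∉ RefGraph.edgeSet P := h.2.2.2
      have h2 : C.ncard = P.length + 1 := by
        rw [hCdef, Set.ncard_insert_of_notMem hfP, RefGraph.edgeSet_ncard h.2.2.1]
      have h3 : (C \ {x}).ncard = C.ncard - 1 := Set.ncard_diff_singleton_of_mem hxC
      have h4 := G.scw_kappa h
      have h5 := G.kappa_ge_set C
      rw [← hCdef] at h4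
      have hQ : Nonempty (Quot (G.step C)) := ⟨Quot.mk _ (G.src f)⟩
      have h6 : 1 ≤ G.kappa C := Nat.card_pos
      omega
    have htightC' : G.kappa C' + C'.ncard = Fintype.card V :=
      G.tight_subset hkCx (fun z hz => ⟨hC'.1 hz, fun heq => hxC' (heq ▸ hz)⟩)
    have hybr : ¬ G.conn (C' \ {y}) (G.src y) (G.tgt y) := G.bridge_of_tight htightC' hy
    obtain ⟨T', hsubT, hkT, hbrT⟩ := G.extend_bridge hconn hy hybr
    obtain ⟨D, hcut, hyD, hDT, -, -⟩ := G.fund_cut hconn hkT (hsubT hy) hbrT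
    have hDC' : D ∩ C' = {y} := by
      apply Set.Subset.antisymm
      · intro z hz
        have hzT : z ∈ D ∩ T' := ⟨hz.1, hsubT hz.2⟩
        rw [hDT] at hzT
        exact hzT
      · intro z hz
        rw [Set.mem_singleton_iff] at hz
        exact hz ▸ ⟨hyD, hy⟩
    exact hall D hcut (by rw [hDC']; exact Set.ncard_singleton y)

end TreesFin

/-! ### Trees and fundamental cycles -/

section TreeIface

variable [Fintype V] [Fintype E]

/-- A spanning tree: connected and every edge is a bridge. -/
def Tree' (T : Set E) : Prop :=
  G.kappa T = 1 ∧ ∀ e ∈ T, ¬ G.conn (T \ {e}) (G.src e) (G.tgt e)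

theorem tree'_nocycle (hconn : G.kappa Set.univ = 1) {T : Set E} (hT : G.Tree' T)
    {C : Set E} (hC : G.IsCycle C) : ¬ C ⊆ T := by
  intro hsub
  obtain ⟨b, hb⟩ := hC.1
  have hbT : b ∈ T := hsub hb
  obtain ⟨D, hcut, hbD, hDT, -, -⟩ := G.fund_cut hconn hT.1 hbT (hT.2 b hbT)
  have hDC : D ∩ C = {b} := by
    apply Set.Subset.antisymm
    · intro z hz
      have : z ∈ D ∩ T := ⟨hz.1, hsub hz.2⟩
      rw [hDT] at this
      exact this
    · intro z hz
      rw [Set.mem_singleton_iff] at hz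
      exact hz ▸ ⟨hbD, hb⟩
  exact hC.2.1 D hcut (by rw [hDC]; exact Set.ncard_singleton b)

theorem bridges_of_nocycle (hconn : G.kappa Set.univ = 1) {T : Set E}
    (h : ∀ C, G.IsCycle C → ¬ C ⊆ T) {e : E} (he : e ∈ T) :
    ¬ G.conn (T \ {e}) (G.src e) (G.tgt e) := by
  intro hc
  obtain ⟨l, hw, hndv, hnde, hlS⟩ := G.conn_exists_path (G.conn_symm hc)
  have hfl : e ∉ l.map Prod.fst := by
    intro hmem
    obtain ⟨q, hq, hq1⟩ := List.mem_map.1 hmem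
    exact (hlS q hq).2 hq1
  have hscw : G.SCW e l := ⟨hw, hndv, hnde, hfl⟩
  refine h _ (G.isCycle_scw hconn hscw) ?_
  intro x hx
  rcases Set.mem_insert_iff.1 hx with rfl | hxl
  · exact he
  · obtain ⟨q, hq, hq1⟩ := List.mem_map.1 hxl
    exact hq1 ▸ (hlS q hq).1

theorem tree'_iff_cond (hconn : G.kappa Set.univ = 1) {T : Set E} :
    ((∀ C, G.IsCycle C → ¬ C ⊆ T) ∧ G.kappa T = 1) ↔ G.Tree' T := by
  constructor
  · rintro ⟨hno, hk⟩
    exact ⟨hk, fun e he => G.bridges_of_nocycle hconn hno he⟩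
  · rintro hT
    exact ⟨fun C hC => G.tree'_nocycle hconn hT hC, hT.1⟩

theorem tree'_ncard {T : Set E} (hT : G.Tree' T) : T.ncard + 1 = Fintype.card V := by
  have h := G.forest_tight_set hT.2
  rw [hT.1] at h
  omega

theorem tree'_of_card (hconn : G.kappa Set.univ = 1) {T : Set E} (h1 : G.kappa T = 1)
    (hcard : T.ncard + 1 ≤ Fintype.card V) : G.Tree' T := by
  refine ⟨h1, fun e he hc => ?_⟩
  have hk : G.kappa (T \ {e}) = 1 := by
    have hins : insert e (T \ {e}) = T := by
      rw [Set.insert_diff_singleton]; exact Set.insert_eq_self.2 he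
    have := G.kappa_insert_eq_of_conn hc
    rw [hins] at this
    omega
  have hge := G.kappa_ge_set (T \ {e})
  have hd : (T \ {e}).ncard = T.ncard - 1 := Set.ncard_diff_singleton_of_mem he
  have hpos : 1 ≤ T.ncard := (Set.ncard_pos (Set.toFinite _)).2 ⟨e, he⟩
  omega

theorem conn_transfer {S S' : Set E} (hgood : ∀ e ∈ S, G.conn S' (G.src e) (G.tgt e))
    {a b : V} (h : G.conn S a b) : G.conn S' a b := by
  rw [conn_iff_rtg] at h
  induction h with
  | refl => rfl
  | tail _ hstep ih =>
    obtain ⟨e, he, ⟨h1, h2⟩ | ⟨h1, h2⟩⟩ := hstep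
    · exact G.conn_trans ih (h1 ▸ h2 ▸ hgood e he)
    · exact G.conn_trans ih (h2 ▸ h1 ▸ (hgood e he).symm)

theorem fund_cycle (hconn : G.kappa Set.univ = 1) {T : Set E} (hT : G.kappa T = 1)
    {f : E} (hf : f ∉ T) :
    ∃ C : Set E, G.IsCycle C ∧ f ∈ C ∧ C ⊆ insert f T ∧
      ∀ x ∈ C, G.conn (C \ {x}) (G.src x) (G.tgt x) := by
  have hV : Nonempty V := ⟨G.src f⟩
  have hc : G.conn T (G.src f) (G.tgt f) := G.kappa_eq_one_iff.1 hT _ _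
  obtain ⟨l, hw, hndv, hnde, hlS⟩ := G.conn_exists_path (G.conn_symm hc)
  have hfl : f ∉ l.map Prod.fst := by
    intro hmem
    obtain ⟨q, hq, hq1⟩ := List.mem_map.1 hmem
    exact hf (hq1 ▸ hlS q hq)
  have hscw : G.SCW f l := ⟨hw, hndv, hnde, hfl⟩
  refine ⟨insert f (RefGraph.edgeSet l), G.isCycle_scw hconn hscw, Set.mem_insert _ _, ?_, ?_⟩
  · intro x hx
    rcases Set.mem_insert_iff.1 hx with rfl | hxl
    · exact Set.mem_insert _ _
    · obtain ⟨q, hq, hq1⟩ := List.mem_map.1 hxl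
      exact Set.mem_insert_of_mem _ (hq1 ▸ hlS q hq)
  · exact fun x hx => G.scw_conn_erase hscw hx

theorem exchange_cycle (hconn : G.kappa Set.univ = 1) {T : Set E} (hT : G.Tree' T)
    {f : E} (hf : f ∉ T) {C : Set E} (hfC : f ∈ C) (hCsub : C ⊆ insert f T)
    (hCconn : ∀ x ∈ C, G.conn (C \ {x}) (G.src x) (G.tgt x))
    {g : E} (hg : g ∈ C) (hgf : g ≠ f) : G.Tree' ((T \ {g}) ∪ {f}) := by
  have hV : Nonempty V := ⟨G.src f⟩
  have hgT : g ∈ T := by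
    rcases Set.mem_insert_iff.1 (hCsub hg) with h' | h'
    · exact absurd h' hgf
    · exact h'
  set T' : Set E := (T \ {g}) ∪ {f} with hT'def
  have hCT' : C \ {g} ⊆ T' := by
    intro x hx
    rcases Set.mem_insert_iff.1 (hCsub hx.1) with rfl | h'
    · exact Set.mem_union_right _ rfl
    · exact Set.mem_union_left _ ⟨h', hx.2⟩
  have hk1 : G.kappa T' = 1 := by
    rw [G.kappa_eq_one_iff]
    intro a b
    refine G.conn_transfer ?_ (G.kappa_eq_one_iff.1 hT.1 a b)
    intro e he
    by_cases heg : e = g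
    · subst heg
      exact G.conn_mono hCT' (hCconn e hg)
    · exact G.conn_edge (Set.mem_union_left _ ⟨he, heg⟩)
  refine G.tree'_of_card hconn hk1 ?_
  have hfT : f ∉ T \ {g} := fun hc => hf hc.1
  have hcard : T'.ncard = T.ncard := by
    rw [hT'def, Set.union_singleton, Set.ncard_insert_of_notMem hfT,
      Set.ncard_diff_singleton_of_mem hgT]
    have : 1 ≤ T.ncard := (Set.ncard_pos (Set.toFinite _)).2 ⟨g, hgT⟩
    omega
  rw [hcard]
  have := G.tree'_ncard hT
  omega

theorem exchange_cut (hconn : G.kappa Set.univ = 1) {T : Set E} (hT : G.Tree' T)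
    {e : E} (he : e ∈ T) {d : E} (hrec : G.kappa ((T \ {e}) ∪ {d}) = 1) (hdT : d ∉ T) :
    G.Tree' ((T \ {e}) ∪ {d}) := by
  refine G.tree'_of_card hconn hrec ?_
  have hdT' : d ∉ T \ {e} := fun hc => hdT hc.1
  have hcard : ((T \ {e}) ∪ {d}).ncard = T.ncard := by
    rw [Set.union_singleton, Set.ncard_insert_of_notMem hdT',
      Set.ncard_diff_singleton_of_mem he]
    have : 1 ≤ T.ncard := (Set.ncard_pos (Set.toFinite _)).2 ⟨e, he⟩
    omega
  rw [hcard]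
  have := G.tree'_ncard hT
  omega

theorem bridge_insert {X : Set E} {y f : E} (hy : y ∈ X)
    (hbrX : ¬ G.conn (X \ {y}) (G.src y) (G.tgt y))
    (hf : ¬ G.conn X (G.src f) (G.tgt f)) :
    ¬ G.conn ((insert f X) \ {y}) (G.src y) (G.tgt y) := by
  have hfy : f ≠ y := fun hc => hf (hc ▸ G.conn_edge hy)
  have heq : (insert f X) \ {y} = insert f (X \ {y}) := by
    ext x
    simp only [Set.mem_diff, Set.mem_insert_iff, Set.mem_singleton_iff]
    constructor
    · rintro ⟨h' | h', h2'⟩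
      · exact Or.inl h'
      · exact Or.inr ⟨h', h2'⟩
    · rintro (h' | ⟨h', h2'⟩)
      · exact ⟨Or.inl h', h' ▸ hfy⟩
      · exact ⟨Or.inr h', h2'⟩
  intro hc
  rw [heq] at hc
  have hXsub : X \ {y} ⊆ X := Set.diff_subset
  rcases G.conn_insert_iff.1 hc with h' | ⟨ha, hb⟩ | ⟨ha, hb⟩
  · exact hbrX h'
  · exact hf (G.conn_trans (G.conn_mono hXsub ha.symm)
      (G.conn_trans (G.conn_edge hy) (G.conn_mono hXsub hb.symm)))
  · exact hf (G.conn_trans (G.conn_mono hXsub hb)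
      (G.conn_trans (G.conn_edge hy).symm (G.conn_mono hXsub ha)))

theorem exists_tree' (hconn : G.kappa Set.univ = 1) : ∃ T : Set E, G.Tree' T := by
  have hV : Nonempty V := G.nonempty_V_of_conn hconn
  suffices h : ∀ n (X : Set E), G.kappa X ≤ n →
      (∀ e ∈ X, ¬ G.conn (X \ {e}) (G.src e) (G.tgt e)) →
      ∃ T, X ⊆ T ∧ G.Tree' T by
    obtain ⟨T, -, hT⟩ := h (G.kappa (∅ : Set E)) ∅ le_rfl (by simp)
    exact ⟨T, hT⟩
  intro n
  induction n with
  | zero =>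
    intro X hk _
    have : Nonempty (Quot (G.step X)) := ⟨Quot.mk _ (Classical.arbitrary V)⟩
    have : 1 ≤ G.kappa X := Nat.card_pos
    omega
  | succ n ih =>
    intro X hk hX
    by_cases h1 : G.kappa X = 1
    · exact ⟨X, subset_rfl, h1, hX⟩
    · have : Nonempty (Quot (G.step X)) := ⟨Quot.mk _ (Classical.arbitrary V)⟩
      have hpos : 1 ≤ G.kappa X := Nat.card_pos
      have h2 : 1 < G.kappa X := by omega
      obtain ⟨f, hf⟩ := G.exists_not_conn_of_kappa_gt hconn h2
      have hkins : G.kappa (insert f X) ≤ n := by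
        have := G.kappa_insert_lt_of_not_conn hf
        omega
      have hfX : f ∉ X := fun hc => hf (G.conn_edge hc)
      have hX' : ∀ e ∈ insert f X, ¬ G.conn ((insert f X) \ {e}) (G.src e) (G.tgt e) := by
        intro e he
        rcases Set.mem_insert_iff.1 he with rfl | heX
        · have heq : (insert e X) \ {e} = X := by
            ext x
            simp only [Set.mem_diff, Set.mem_insert_iff, Set.mem_singleton_iff]
            constructor
            · rintro ⟨h' | h', h2'⟩
              · exact absurd h' h2'
              · exact h'
            · intro hx
              exact ⟨Or.inr hx, fun hc => hfX (hc ▸ hx)⟩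
          rw [heq]
          exact hf
        · exact G.bridge_insert heX (hX e heX) hf
      obtain ⟨T, hsub, hT⟩ := ih (insert f X) hkins hX'
      exact ⟨T, (Set.subset_insert f X).trans hsub, hT⟩

theorem lact_not_mem_tree (hconn : G.kappa Set.univ = 1) {T : Set E} (hT : G.Tree' T)
    [LinearOrder E] {e : E} (he : e ∈ G.Lact T) : e ∉ T := by
  obtain ⟨C, hC, heC, hCsub, -⟩ := he
  intro heT
  refine G.tree'_nocycle hconn hT hC ?_
  intro x hx
  rcases hCsub x hx with rfl | h'
  · exact heT
  · exact h'

theorem iact_mem_tree (hconn : G.kappa Set.univ = 1) {T : Set E} (hT : G.Tree' T)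
    [LinearOrder E] {e : E} (he : e ∈ G.Iact T) : e ∈ T := by
  obtain ⟨C, hC, heC, hCavoid, -⟩ := he
  obtain ⟨x, hxC, hxT⟩ := G.cut_meets_connected hC hconn hT.1
  by_cases hxe : x = e
  · exact hxe ▸ hxT
  · exact absurd hxT (hCavoid x hxC hxe)

end TreeIface

/-! ### The activity partition -/

section PartitionFin

variable [Fintype V] [Fintype E] [LinearOrder E]

/-- Rank of an edge in the linear order. -/
def rk (e : E) : ℕ := (Finset.univ.filter (· < e)).card

theorem rk_strictMono : StrictMono (rk (E := E)) := by
  intro a b hab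
  refine Finset.card_lt_card ?_
  refine (Finset.ssubset_iff_of_subset ?_).2 ⟨a, ?_, ?_⟩
  · intro x hx
    simp only [Finset.mem_filter, Finset.mem_univ, true_and] at hx ⊢
    exact hx.trans hab
  · simp [hab]
  · simp

theorem rk_lt_iff {e f : E} : rk e < rk f ↔ e < f := rk_strictMono.lt_iff_lt

theorem rk_lt_card (e : E) : rk e < Fintype.card E := by
  rw [← Finset.card_univ]
  refine Finset.card_lt_card ?_
  refine (Finset.ssubset_iff_of_subset (Finset.filter_subset _ _)).2 ⟨e, Finset.mem_univ e, ?_⟩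
  simp

/-- Weight used to select the tree of the interval containing `S`. -/
noncomputable def wgt (S : Set E) (e : E) : ℕ :=
  if e ∈ S then Fintype.card E - 1 - rk e else Fintype.card E + rk e

theorem wgt_lt_of_mem {S : Set E} {e f : E} (he : e ∈ S) (hf : f ∉ S) :
    wgt S e < wgt S f := by
  have h1 := rk_lt_card e
  rw [wgt, wgt, if_pos he, if_neg hf]
  omega

theorem le_of_wgt_cycle {S : Set E} {g f : E} (hgf : wgt S g ≤ wgt S f) (hf : f ∈ S) :
    g ∈ S ∧ f ≤ g := by
  by_cases hg : g ∈ S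
  · refine ⟨hg, ?_⟩
    rw [wgt, wgt, if_pos hg, if_pos hf] at hgf
    have h1 := rk_lt_card f
    have h2 := rk_lt_card g
    have h3 : rk f ≤ rk g := by omega
    by_contra hcon
    push_neg at hcon
    exact absurd (rk_lt_iff.2 hcon) (by omega)
  · exact absurd hgf (not_le.2 (wgt_lt_of_mem hf hg))

theorem le_of_wgt_cut {S : Set E} {e d : E} (hed : wgt S e ≤ wgt S d) (he : e ∉ S) :
    d ∉ S ∧ e ≤ d := by
  by_cases hd : d ∈ S
  · exact absurd hed (not_le.2 (wgt_lt_of_mem hd he))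
  · refine ⟨hd, ?_⟩
    rw [wgt, wgt, if_neg he, if_neg hd] at hed
    have h3 : rk e ≤ rk d := by omega
    by_contra hcon
    push_neg at hcon
    exact absurd (rk_lt_iff.2 hcon) (by omega)

theorem partition_exists (hconn : G.kappa Set.univ = 1) (S : Set E) :
    ∃ T : Finset E, G.Tree' ↑T ∧ (∀ f, f ∈ S → f ∉ T → f ∈ G.Lact ↑T) ∧
      (∀ e, e ∈ T → e ∉ S → e ∈ G.Iact ↑T) := by
  classical
  obtain ⟨T₀, hT₀⟩ := G.exists_tree' hconn
  set trees := Finset.univ.filter (fun T : Finset E => G.Tree' ↑T) with htrees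
  have htne : trees.Nonempty := by
    refine ⟨T₀.toFinset, ?_⟩
    simp only [htrees, Finset.mem_filter, Finset.mem_univ, true_and]
    rwa [Set.coe_toFinset]
  obtain ⟨T, hTmem, hTmin⟩ := Finset.exists_min_image trees (fun T => ∑ e ∈ T, wgt S e) htne
  have hT : G.Tree' ↑T := by
    simpa only [htrees, Finset.mem_filter, Finset.mem_univ, true_and] using hTmem
  refine ⟨T, hT, ?_, ?_⟩
  · intro f hfS hfT
    have hfT' : f ∉ (↑T : Set E) := by simpa using hfT
    obtain ⟨C, hC, hfC, hCsub, hCconn⟩ := G.fund_cycle hconn hT.1 hfT'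
    refine ⟨C, hC, hfC, ?_, ?_⟩
    · intro h hh
      exact Set.mem_insert_iff.1 (hCsub hh)
    · intro g hgC
      by_cases hgf : g = f
      · exact le_of_eq hgf.symm
      · have hgT : g ∈ (↑T : Set E) := by
          rcases Set.mem_insert_iff.1 (hCsub hgC) with h' | h'
          · exact absurd h' hgf
          · exact h'
        have hgTF : g ∈ T := by simpa using hgT
        have htree' : G.Tree' (((↑T : Set E) \ {g}) ∪ {f}) :=
          G.exchange_cycle hconn hT hfT' hfC hCsub hCconn hgC hgf
        set T' : Finset E := insert f (T.erase g) with hT'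
        have hcoe : (↑T' : Set E) = ((↑T : Set E) \ {g}) ∪ {f} := by
          rw [hT', Finset.coe_insert, Finset.coe_erase, Set.union_singleton]
        have hT'mem : T' ∈ trees := by
          simp only [htrees, Finset.mem_filter, Finset.mem_univ, true_and]
          rw [hcoe]
          exact htree'
        have hmin := hTmin T' hT'mem
        have hfnotin : f ∉ T.erase g := fun hc => hfT (Finset.mem_of_mem_erase hc)
        have hsum : ∑ e ∈ T', wgt S e = wgt S f + ∑ e ∈ T.erase g, wgt S e := by
          rw [hT', Finset.sum_insert hfnotin]
        have hsum2 : (∑ e ∈ T.erase g, wgt S e) + wgt S g = ∑ e ∈ T, wgt S e :=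
          Finset.sum_erase_add T _ hgTF
        have hwle : wgt S g ≤ wgt S f := by omega
        exact (le_of_wgt_cycle hwle hfS).2
  · intro e heT heS
    have heT' : (e : E) ∈ (↑T : Set E) := by simpa using heT
    obtain ⟨D, hcut, heD, hDT, hrec, -⟩ := G.fund_cut hconn hT.1 heT' (hT.2 e heT')
    refine ⟨D, hcut, heD, ?_, ?_⟩
    · intro d hd hde hdT
      have : d ∈ D ∩ ↑T := ⟨hd, hdT⟩
      rw [hDT] at this
      exact hde this
    · intro d hdD
      by_cases hde : d = e
      · exact le_of_eq hde.symm
      · have hdT : d ∉ (↑T : Set E) := by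
          intro hc
          have : d ∈ D ∩ ↑T := ⟨hdD, hc⟩
          rw [hDT] at this
          exact hde this
        have htree' := G.exchange_cut hconn hT heT' (hrec d hdD) hdT
        set T' : Finset E := insert d (T.erase e) with hT'
        have hcoe : (↑T' : Set E) = ((↑T : Set E) \ {e}) ∪ {d} := by
          rw [hT', Finset.coe_insert, Finset.coe_erase, Set.union_singleton]
        have hT'mem : T' ∈ trees := by
          simp only [htrees, Finset.mem_filter, Finset.mem_univ, true_and]
          rw [hcoe]
          exact htree'
        have hmin := hTmin T' hT'mem
        have hdnotin : d ∉ T.erase e := fun hc => hdT (by simpa using Finset.mem_of_mem_erase hc)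
        have hsum : ∑ x ∈ T', wgt S x = wgt S d + ∑ x ∈ T.erase e, wgt S x := by
          rw [hT', Finset.sum_insert hdnotin]
        have hsum2 : (∑ x ∈ T.erase e, wgt S x) + wgt S e = ∑ x ∈ T, wgt S x :=
          Finset.sum_erase_add T _ heT
        have hwle : wgt S e ≤ wgt S d := by omega
        exact (le_of_wgt_cut hwle heS).2

theorem partition_step (hconn : G.kappa Set.univ = 1) {S : Set E} {Ta Tb : Finset E}
    (ha : G.Tree' ↑Ta) (hb : G.Tree' ↑Tb)
    (hLb : ∀ f, f ∈ S → f ∉ Tb → f ∈ G.Lact ↑Tb)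
    (hIa : ∀ e, e ∈ Ta → e ∉ S → e ∈ G.Iact ↑Ta)
    {g : E} (hg1 : g ∈ Ta) (hg2 : g ∉ Tb) :
    ∃ h, (h ∈ Tb ∧ h ∉ Ta) ∧ g < h := by
  by_cases hgS : g ∈ S
  · obtain ⟨C, hC, hgC, hCsub, hmin⟩ := hLb g hgS hg2
    have hnotsub : ¬ C ⊆ ↑Ta := G.tree'_nocycle hconn ha hC
    obtain ⟨h, hhC, hhTa⟩ := Set.not_subset.1 hnotsub
    have hhg : h ≠ g := fun hc => hhTa (hc ▸ (by simpa using hg1))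
    have hhTb : h ∈ (↑Tb : Set E) := by
      rcases hCsub h hhC with h' | h'
      · exact absurd h' hhg
      · exact h'
    exact ⟨h, ⟨by simpa using hhTb, by simpa using hhTa⟩,
      lt_of_le_of_ne (hmin h hhC) (Ne.symm hhg)⟩
  · obtain ⟨D, hcut, hgD, havoid, hmin⟩ := hIa g hg1 hgS
    obtain ⟨x, hxD, hxTb⟩ := G.cut_meets_connected hcut hconn hb.1
    have hxg : x ≠ g := fun hc => hg2 (by simpa using hc ▸ hxTb)
    have hxTa : x ∉ (↑Ta : Set E) := havoid x hxD hxg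
    exact ⟨x, ⟨by simpa using hxTb, by simpa using hxTa⟩,
      lt_of_le_of_ne (hmin x hxD) (Ne.symm hxg)⟩

theorem partition_unique (hconn : G.kappa Set.univ = 1) {S : Set E} {T1 T2 : Finset E}
    (h1 : G.Tree' ↑T1) (h2 : G.Tree' ↑T2)
    (hL1 : ∀ f, f ∈ S → f ∉ T1 → f ∈ G.Lact ↑T1)
    (hI1 : ∀ e, e ∈ T1 → e ∉ S → e ∈ G.Iact ↑T1)
    (hL2 : ∀ f, f ∈ S → f ∉ T2 → f ∈ G.Lact ↑T2)
    (hI2 : ∀ e, e ∈ T2 → e ∉ S → e ∈ G.Iact ↑T2) : T1 = T2 := by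
  classical
  by_contra hne
  set B := (T1 \ T2) ∪ (T2 \ T1) with hB
  have hBne : B.Nonempty := by
    by_contra hc
    rw [Finset.not_nonempty_iff_eq_empty] at hc
    refine hne (Finset.ext fun x => ?_)
    constructor
    · intro hx
      by_contra hx2
      have : x ∈ B := Finset.mem_union_left _ (Finset.mem_sdiff.2 ⟨hx, hx2⟩)
      rw [hc] at this
      exact absurd this (Finset.notMem_empty x)
    · intro hx
      by_contra hx2
      have : x ∈ B := Finset.mem_union_right _ (Finset.mem_sdiff.2 ⟨hx, hx2⟩)
      rw [hc] at this
      exact absurd this (Finset.notMem_empty x)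
  obtain ⟨m, hm, hmax⟩ := Finset.exists_max_image B id hBne
  rcases Finset.mem_union.1 hm with hm1 | hm2
  · obtain ⟨hmT1, hmT2⟩ := Finset.mem_sdiff.1 hm1
    obtain ⟨h, ⟨hhT2, hhT1⟩, hlt⟩ := G.partition_step hconn h1 h2 hL2 hI1 hmT1 hmT2
    have hhB : h ∈ B := Finset.mem_union_right _ (Finset.mem_sdiff.2 ⟨hhT2, hhT1⟩)
    exact absurd (hmax h hhB) (not_le.2 hlt)
  · obtain ⟨hmT2, hmT1⟩ := Finset.mem_sdiff.1 hm2
    obtain ⟨h, ⟨hhT1, hhT2⟩, hlt⟩ := G.partition_step hconn h2 h1 hL1 hI2 hmT2 hmT1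
    have hhB : h ∈ B := Finset.mem_union_left _ (Finset.mem_sdiff.2 ⟨hhT1, hhT2⟩)
    exact absurd (hmax h hhB) (not_le.2 hlt)

end PartitionFin

/-! ### Interval counting -/

section IntervalFin

variable [Fintype V] [Fintype E] [LinearOrder E]

theorem kappa_union_finset_eq {X : Set E} (B : Finset E)
    (h : ∀ b ∈ B, G.conn X (G.src b) (G.tgt b)) : G.kappa (X ∪ ↑B) = G.kappa X := by
  classical
  induction B using Finset.induction with
  | empty => simp
  | @insert b F hb ih =>
    have h2 : X ∪ ↑(insert b F) = insert b (X ∪ ↑F) := by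
      rw [Finset.coe_insert, Set.union_insert]
    rw [h2, G.kappa_insert_eq_of_conn (G.conn_mono Set.subset_union_left
      (h b (Finset.mem_insert_self _ _)))]
    exact ih (fun c hc => h c (Finset.mem_insert_of_mem hc))

theorem lact_cycle_conn (hconn : G.kappa Set.univ = 1) {T : Set E} (hT : G.Tree' T)
    {b : E} {C : Set E} (hC : G.IsCycle C) (hbC : b ∈ C)
    (hsub : ∀ x ∈ C, x = b ∨ x ∈ T) (hbT : b ∉ T) :
    G.conn (C \ {b}) (G.src b) (G.tgt b) := by
  have hV : Nonempty V := G.nonempty_V_of_conn hconn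
  by_contra hnc
  set U : Set V := {w | G.conn (C \ {b}) w (G.src b)} with hUdef
  have hsrcU : G.src b ∈ U := G.conn_refl _
  have htgtU : G.tgt b ∉ U := fun h => hnc (G.conn_symm h)
  have hTconn : G.conn T (G.src b) (G.tgt b) := G.kappa_eq_one_iff.1 hT.1 _ _
  obtain ⟨l, hw, hndv, hnde, hlS⟩ := G.conn_exists_path hTconn
  obtain ⟨q, hql, hqcr⟩ := G.walk_cross hw hsrcU htgtU
  have hyT : q.1 ∈ T := hlS q hql
  have hyb : q.1 ≠ b := fun hc => hbT (hc ▸ hyT)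
  have hyC : q.1 ∉ C := by
    intro hyC
    have : G.src q.1 ∈ U ↔ G.tgt q.1 ∈ U :=
      ⟨fun h => G.conn_trans (G.conn_edge (⟨hyC, hyb⟩ : q.1 ∈ C \ {b})).symm h,
       fun h => G.conn_trans (G.conn_edge (⟨hyC, hyb⟩ : q.1 ∈ C \ {b})) h⟩
    exact hqcr this
  have hsep : ¬ G.conn (T \ {q.1}) (G.src b) (G.tgt b) := by
    intro hcc
    obtain ⟨l1, l2, hl⟩ := List.append_of_mem hql
    rw [hl] at hw hnde
    obtain ⟨m, hw1, hw2⟩ := G.walk_split hw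
    have hm : m = G.ftail q := hw2.1.symm
    have hsplit : (l1 ++ q :: l2).map Prod.fst =
        l1.map Prod.fst ++ q.1 :: l2.map Prod.fst := by simp
    rw [hsplit] at hnde
    have hy1 : q.1 ∉ l1.map Prod.fst :=
      fun hc => (List.disjoint_of_nodup_append hnde) hc (List.mem_cons_self)
    have hy2 : q.1 ∉ l2.map Prod.fst := (List.nodup_cons.1 (List.Nodup.of_append_right hnde)).1
    have hmem1 : ∀ p ∈ l1, p.1 ∈ T \ {q.1} := by
      intro p hp
      refine ⟨hlS p (hl ▸ List.mem_append.2 (Or.inl hp)), ?_⟩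
      exact fun hc => hy1 (hc ▸ List.mem_map_of_mem (f := Prod.fst) hp)
    have hmem2 : ∀ p ∈ l2, p.1 ∈ T \ {q.1} := by
      intro p hp
      refine ⟨hlS p (hl ▸ List.mem_append.2 (Or.inr (List.mem_cons_of_mem _ hp))), ?_⟩
      exact fun hc => hy2 (hc ▸ List.mem_map_of_mem (f := Prod.fst) hp)
    have hc1 : G.conn (T \ {q.1}) (G.src b) (G.ftail q) := hm ▸ G.conn_of_walk hw1 hmem1
    have hc2 : G.conn (T \ {q.1}) (G.fhead q) (G.tgt b) := G.conn_of_walk hw2.2 hmem2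
    have hq : G.conn (T \ {q.1}) (G.ftail q) (G.fhead q) :=
      G.conn_trans (G.conn_trans hc1.symm hcc) hc2.symm
    have hfin : G.conn (T \ {q.1}) (G.src q.1) (G.tgt q.1) := by
      cases hdq : q.2
      · have e1 : G.ftail q = G.tgt q.1 := by simp [ftail, hdq]
        have e2 : G.fhead q = G.src q.1 := by simp [fhead, hdq]
        exact (e1 ▸ e2 ▸ hq).symm
      · have e1 : G.ftail q = G.src q.1 := by simp [ftail, hdq]
        have e2 : G.fhead q = G.tgt q.1 := by simp [fhead, hdq]
        exact e1 ▸ e2 ▸ hq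
    exact hT.2 q.1 hyT hfin
  obtain ⟨D, hcut, hyD, hDT, -, hDall⟩ := G.fund_cut hconn hT.1 hyT (hT.2 q.1 hyT)
  have hbD : b ∈ D := hDall b hsep
  have hDC : D ∩ C = {b} := by
    apply Set.Subset.antisymm
    · rintro x ⟨hxD, hxC⟩
      rcases hsub x hxC with rfl | hxT
      · rfl
      · have hxy : x ∈ D ∩ T := ⟨hxD, hxT⟩
        rw [hDT] at hxy
        rw [Set.mem_singleton_iff] at hxy
        exact absurd (hxy ▸ hxC) hyC
    · intro x hx
      rw [Set.mem_singleton_iff] at hx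
      exact hx ▸ ⟨hbD, hbC⟩
  exact hC.2.1 D hcut (by rw [hDC]; exact Set.ncard_singleton b)

theorem interval_kappa (hconn : G.kappa Set.univ = 1) {T A B : Finset E}
    (hT : G.Tree' ↑T) (hA : ↑A ⊆ G.Iact ↑T) (hB : ↑B ⊆ G.Lact ↑T) :
    G.kappa ((↑T \ ↑A) ∪ ↑B) = 1 + A.card := by
  have hAT : (↑A : Set E) ⊆ (↑T : Set E) := fun a ha => G.iact_mem_tree hconn hT (hA ha)
  have htightT : G.kappa ↑T + (↑T : Set E).ncard = Fintype.card V := G.forest_tight_set hT.2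
  have htight : G.kappa ((↑T : Set E) \ ↑A) + ((↑T : Set E) \ ↑A).ncard = Fintype.card V :=
    G.tight_subset htightT Set.diff_subset
  have hnd : ((↑T : Set E) \ ↑A).ncard = T.card - A.card := by
    rw [Set.ncard_diff hAT, Set.ncard_coe_finset, Set.ncard_coe_finset]
  have hAcard : A.card ≤ T.card := Finset.card_le_card (Finset.coe_subset.1 hAT)
  have hTn := G.tree'_ncard hT
  have hplus : G.kappa ((↑T : Set E) \ ↑A) = 1 + A.card := by
    rw [Set.ncard_coe_finset] at hTn
    rw [hT.1] at htightT
    rw [Set.ncard_coe_finset] at htightT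
    omega
  have hconnB : ∀ b ∈ B, G.conn ((↑T : Set E) \ ↑A) (G.src b) (G.tgt b) := by
    intro b hbB
    have hbL : b ∈ G.Lact ↑T := hB hbB
    have hbT : b ∉ (↑T : Set E) := G.lact_not_mem_tree hconn hT hbL
    obtain ⟨C, hC, hbC, hsubC, hminb⟩ := hbL
    have hCA : ∀ a, a ∈ (↑A : Set E) → a ∉ C := by
      intro a haA haC
      obtain ⟨D, hcutD, haD, havoidD, hminD⟩ := hA haA
      have haT : a ∈ (↑T : Set E) := hAT haA
      have hDC : D ∩ C = {a} := by
        apply Set.Subset.antisymm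
        · rintro x ⟨hxD, hxC⟩
          rcases hsubC x hxC with rfl | hxT
          · exfalso
            have h1 : a ≤ x := hminD x hxD
            have h2 : x ≤ a := hminb a haC
            exact hbT ((le_antisymm h2 h1) ▸ haT)
          · by_cases hxa : x = a
            · exact hxa ▸ rfl
            · exact absurd hxT (havoidD x hxD hxa)
        · intro x hx
          rw [Set.mem_singleton_iff] at hx
          exact hx ▸ ⟨haD, haC⟩
      exact hC.2.1 D hcutD (by rw [hDC]; exact Set.ncard_singleton a)
    have hkey := G.lact_cycle_conn hconn hT hC hbC hsubC hbT
    refine G.conn_mono ?_ hkey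
    intro x hx
    rcases hsubC x hx.1 with rfl | hxT
    · exact absurd rfl hx.2
    · exact ⟨hxT, fun hxA => hCA x hxA hx.1⟩
  rw [G.kappa_union_finset_eq B hconnB]
  exact hplus

end IntervalFin

end RefGraph

/-- Tutte's spanning tree activities expansion: for a connected
graph `G`, `T_G(x̂, ŷ) = Σ_T x̂^{|Î(T)|} ŷ^{|L̂(T)|}` over spanning trees `T`
(spanning subgraphs with no cycle and a single connected component). -/
theorem tutte_spanning_tree_expansion {V E : Type} [Fintype V] [Fintype E]
    [LinearOrder E] (G : RefGraph V E) (hconn : G.kappa Set.univ = 1)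
    (R : Type) [CommRing R] (x y : R) :
    G.tutte R x y =
      ∑ T : Finset E,
        if (∀ C : Set E, G.IsCycle C → ¬ C ⊆ ↑T) ∧ G.kappa ↑T = 1 then
          x ^ (G.Iact ↑T).ncard * y ^ (G.Lact ↑T).ncard
        else 0 := by
  classical
  set τ : Finset E → Finset E := fun S => (G.partition_exists hconn (↑S : Set E)).choose
    with hτdef
  have hτ : ∀ S : Finset E, G.Tree' ↑(τ S) ∧
      (∀ f, f ∈ (↑S : Set E) → f ∉ τ S → f ∈ G.Lact ↑(τ S)) ∧
      (∀ e, e ∈ τ S → e ∉ (↑S : Set E) → e ∈ G.Iact ↑(τ S)) :=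
    fun S => (G.partition_exists hconn (↑S : Set E)).choose_spec
  have huniq : ∀ (S T : Finset E), G.Tree' ↑T →
      (∀ f, f ∈ (↑S : Set E) → f ∉ T → f ∈ G.Lact ↑T) →
      (∀ e, e ∈ T → e ∉ (↑S : Set E) → e ∈ G.Iact ↑T) → τ S = T :=
    fun S T hT hL hI =>
      G.partition_unique hconn (hτ S).1 hT (hτ S).2.1 (hτ S).2.2 hL hI
  rw [RefGraph.tutte, ← Finset.sum_fiberwise_of_maps_to (g := τ) (t := Finset.univ)
    (fun S _ => Finset.mem_univ (τ S))
    (fun S : Finset E => (x - 1) ^ (G.kappa ↑S - G.kappa Set.univ) *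
      (y - 1) ^ (S.card + G.kappa ↑S - Fintype.card V))]
  refine Finset.sum_congr rfl ?_
  intro T _
  by_cases hTr : G.Tree' (↑T : Set E)
  · rw [if_pos ((G.tree'_iff_cond hconn).2 hTr)]
    set IntF := (G.Iact (↑T : Set E)).toFinset with hIntF
    set ExtF := (G.Lact (↑T : Set E)).toFinset with hExtF
    have hIntT : IntF ⊆ T := by
      intro a ha
      rw [hIntF, Set.mem_toFinset] at ha
      exact Finset.mem_coe.1 (G.iact_mem_tree hconn hTr ha)
    have hExtT : ∀ b ∈ ExtF, b ∉ T := by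
      intro b hb
      rw [hExtF, Set.mem_toFinset] at hb
      exact fun hc => (G.lact_not_mem_tree hconn hTr hb) (Finset.mem_coe.2 hc)
    have hfib : ∀ S : Finset E, τ S = T ↔
        ((∀ f, f ∈ (↑S : Set E) → f ∉ T → f ∈ G.Lact ↑T) ∧
         (∀ e, e ∈ T → e ∉ (↑S : Set E) → e ∈ G.Iact ↑T)) := by
      intro S
      constructor
      · intro h
        constructor
        · rw [← h]; exact (hτ S).2.1
        · rw [← h]; exact (hτ S).2.2
      · rintro ⟨hL, hI⟩
        exact huniq S T hTr hL hI
    have hstep : ∑ S ∈ Finset.univ.filter (fun S => τ S = T),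
        ((x - 1) ^ (G.kappa ↑S - G.kappa Set.univ) *
          (y - 1) ^ (S.card + G.kappa ↑S - Fintype.card V))
        = ∑ p ∈ IntF.powerset ×ˢ ExtF.powerset,
            (x - 1) ^ p.1.card * (y - 1) ^ p.2.card := by
      refine Finset.sum_nbij' (fun S => (T \ S, S \ T))
        (fun p => (T \ p.1) ∪ p.2) ?_ ?_ ?_ ?_ ?_
      · intro S hS
        rw [Finset.mem_filter] at hS
        obtain ⟨hL, hI⟩ := (hfib S).1 hS.2
        rw [Finset.mem_product]
        constructor
        · rw [Finset.mem_powerset]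
          intro e he
          rw [Finset.mem_sdiff] at he
          rw [hIntF, Set.mem_toFinset]
          exact hI e he.1 (fun hc => he.2 (Finset.mem_coe.1 hc))
        · rw [Finset.mem_powerset]
          intro f hf
          rw [Finset.mem_sdiff] at hf
          rw [hExtF, Set.mem_toFinset]
          exact hL f (Finset.mem_coe.2 hf.1) hf.2
      · intro p hp
        rw [Finset.mem_product, Finset.mem_powerset, Finset.mem_powerset] at hp
        rw [Finset.mem_filter]
        refine ⟨Finset.mem_univ _, (hfib _).2 ⟨?_, ?_⟩⟩
        · intro f hfS hfT
          rcases Finset.mem_union.1 (Finset.mem_coe.1 hfS) with h' | h'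
          · exact absurd (Finset.mem_sdiff.1 h').1 hfT
          · rw [← Set.mem_toFinset]
            exact hp.2 h'
        · intro e heT heS
          have heA : e ∈ p.1 := by
            by_contra hc
            exact heS (Finset.mem_coe.2 (Finset.mem_union_left _
              (Finset.mem_sdiff.2 ⟨heT, hc⟩)))
          rw [← Set.mem_toFinset]
          exact hp.1 heA
      · intro S _
        ext a
        simp only [Finset.mem_union, Finset.mem_sdiff]
        tauto
      · intro p hp
        rw [Finset.mem_product, Finset.mem_powerset, Finset.mem_powerset] at hp
        have hA : p.1 ⊆ T := hp.1.trans hIntT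
        have hB : ∀ b ∈ p.2, b ∉ T := fun b hb => hExtT b (hp.2 hb)
        have h1 : T \ ((T \ p.1) ∪ p.2) = p.1 := by
          ext a
          simp only [Finset.mem_sdiff, Finset.mem_union, not_or, not_and, not_not]
          constructor
          · rintro ⟨haT, h', -⟩
            exact h' haT
          · intro haA
            exact ⟨hA haA, fun _ => haA, fun hc => (hB a hc) (hA haA)⟩
        have h2 : ((T \ p.1) ∪ p.2) \ T = p.2 := by
          ext a
          simp only [Finset.mem_sdiff, Finset.mem_union]
          constructor
          · rintro ⟨h' | h', haT⟩
            · exact absurd h'.1 haT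
            · exact h'
          · intro haB
            exact ⟨Or.inr haB, hB a haB⟩
        exact Prod.ext h1 h2
      · intro S hS
        rw [Finset.mem_filter] at hS
        obtain ⟨hL, hI⟩ := (hfib S).1 hS.2
        have hA : (↑(T \ S) : Set E) ⊆ G.Iact ↑T := by
          intro e he
          rw [Finset.coe_sdiff] at he
          exact hI e (Finset.mem_coe.1 he.1) (fun hc => he.2 hc)
        have hB : (↑(S \ T) : Set E) ⊆ G.Lact ↑T := by
          intro f hf
          rw [Finset.coe_sdiff] at hf
          exact hL f hf.1 (fun hc => hf.2 (Finset.mem_coe.2 hc))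
        have hrepr : (T \ (T \ S)) ∪ (S \ T) = S := by
          ext a
          simp only [Finset.mem_union, Finset.mem_sdiff]
          tauto
        have hScoe : (↑S : Set E) = (↑T \ ↑(T \ S)) ∪ ↑(S \ T) := by
          rw [← Finset.coe_sdiff, ← Finset.coe_union, hrepr]
        have hκ : G.kappa ↑S = 1 + (T \ S).card := by
          rw [hScoe]
          exact G.interval_kappa hconn hTr hA hB
        have hdisj : Disjoint (T \ (T \ S)) (S \ T) := by
          rw [Finset.disjoint_left]
          intro a ha hb
          exact (Finset.mem_sdiff.1 hb).2 (Finset.mem_sdiff.1 ha).1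
        have hcard : S.card = (T.card - (T \ S).card) + (S \ T).card := by
          conv_lhs => rw [← hrepr]
          rw [Finset.card_union_of_disjoint hdisj,
            Finset.card_sdiff_of_subset Finset.sdiff_subset]
        have hTS_le : (T \ S).card ≤ T.card := Finset.card_le_card Finset.sdiff_subset
        have hn : T.card + 1 = Fintype.card V := by
          have := G.tree'_ncard hTr
          rwa [Set.ncard_coe_finset] at this
        have e1 : G.kappa ↑S - G.kappa Set.univ = (T \ S).card := by
          rw [hconn, hκ]
          omega
        have e2 : S.card + G.kappa ↑S - Fintype.card V = (S \ T).card := by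
          rw [hκ, hcard]
          omega
        rw [e1, e2]
    rw [hstep, Finset.sum_product]
    dsimp only
    rw [← Finset.sum_mul_sum]
    have hxsum : ∑ A ∈ IntF.powerset, (x - 1) ^ A.card = x ^ IntF.card := by
      have h := Finset.prod_add (fun _ : E => (x - 1)) (fun _ : E => (1 : R)) IntF
      simp only [Finset.prod_const, one_pow, mul_one] at h
      rw [sub_add_cancel] at h
      exact h.symm
    have hysum : ∑ B ∈ ExtF.powerset, (y - 1) ^ B.card = y ^ ExtF.card := by
      have h := Finset.prod_add (fun _ : E => (y - 1)) (fun _ : E => (1 : R)) ExtF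
      simp only [Finset.prod_const, one_pow, mul_one] at h
      rw [sub_add_cancel] at h
      exact h.symm
    rw [hxsum, hysum, hIntF, hExtF, ← Set.ncard_eq_toFinset_card',
      ← Set.ncard_eq_toFinset_card']
  · rw [if_neg (fun hc => hTr ((G.tree'_iff_cond hconn).1 hc))]
    have hempty : Finset.univ.filter (fun S => τ S = T) = ∅ := by
      rw [Finset.filter_eq_empty_iff]
      intro S _
      exact fun heq => hTr (heq ▸ (hτ S).1)
    rw [hempty, Finset.sum_empty]
end
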